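/- arXiv:2212.07215 — 5 statements merged into one kernel-verified Lean document; each statement's English description precedes it below -/
import Mathlib

section
/- Let 1 ≤ m ≤ d and let T be an invertible d×d real matrix. Then the m-th singular value of π∘T, where π : ℝ^d → ℝ^m is the projection onto the first m coordinates, satisfies α_m(π∘T) ≥ α_1(T)^{1−m} · α_d(T)^m. -/
/-- The `l`-th singular value of an `m × d` real matrix `A`, via the
Courant–Fischer min-max characterization. -/
noncomputable def singVal {m d : ℕ} (A : Matrix (Fin m) (Fin d) ℝ) (l : ℕ) : ℝ :=
  ⨅ V : {V : Submodule ℝ (EuclideanSpace ℝ (Fin d)) // Module.finrank ℝ V = d + 1 - l},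
    ⨆ x : {x : EuclideanSpace ℝ (Fin d) // x ∈ V.1 ∧ ‖x‖ = 1}, ‖Matrix.toEuclideanLin A x‖

/-- The coordinate projection `π_{d,m} : ℝ^d → ℝ^m`, `(x_1,...,x_d) ↦ (x_1,...,x_m)`,
as an `m × d` matrix. -/
def projMat (d m : ℕ) : Matrix (Fin m) (Fin d) ℝ :=
  Matrix.of fun i j => if (i : ℕ) = (j : ℕ) then 1 else 0

open Matrix Module

section Aux

variable {d m k : ℕ}

lemma toEuclideanLin_mul_apply_aux {a b c : ℕ} (A : Matrix (Fin a) (Fin b) ℝ)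
    (B : Matrix (Fin b) (Fin c) ℝ) (x : EuclideanSpace ℝ (Fin c)) :
    Matrix.toEuclideanLin (A * B) x = Matrix.toEuclideanLin A (Matrix.toEuclideanLin B x) := by
  simp [Matrix.toEuclideanLin_apply, Matrix.mulVec_mulVec]

lemma norm_toEuclideanLin_le (A : Matrix (Fin m) (Fin d) ℝ) (x : EuclideanSpace ℝ (Fin d)) :
    ‖Matrix.toEuclideanLin A x‖
      ≤ ‖LinearMap.toContinuousLinearMap (Matrix.toEuclideanLin A)‖ * ‖x‖ := by
  have := (LinearMap.toContinuousLinearMap (Matrix.toEuclideanLin A)).le_opNorm x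
  simpa using this

lemma bddAbove_aux (A : Matrix (Fin m) (Fin d) ℝ) (V : Submodule ℝ (EuclideanSpace ℝ (Fin d))) :
    BddAbove (Set.range fun x : {x : EuclideanSpace ℝ (Fin d) // x ∈ V ∧ ‖x‖ = 1} =>
      ‖Matrix.toEuclideanLin A x‖) := by
  refine ⟨‖LinearMap.toContinuousLinearMap (Matrix.toEuclideanLin A)‖, ?_⟩
  rintro r ⟨x, rfl⟩
  have := norm_toEuclideanLin_le A x
  rw [x.2.2, mul_one] at this
  exact this

lemma bddBelow_aux (A : Matrix (Fin m) (Fin d) ℝ) (l : ℕ) :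
    BddBelow (Set.range fun V : {V : Submodule ℝ (EuclideanSpace ℝ (Fin d)) //
        Module.finrank ℝ V = d + 1 - l} =>
      ⨆ x : {x : EuclideanSpace ℝ (Fin d) // x ∈ V.1 ∧ ‖x‖ = 1},
        ‖Matrix.toEuclideanLin A x‖) := by
  refine ⟨0, ?_⟩
  rintro r ⟨V, rfl⟩
  exact Real.iSup_nonneg fun x => norm_nonneg _

/-- span of the first `k` coordinate vectors -/
def coordSpan (d k : ℕ) (hk : k ≤ d) : Submodule ℝ (EuclideanSpace ℝ (Fin d)) :=
  Submodule.span ℝ (Set.range fun i : Fin k => EuclideanSpace.single (Fin.castLE hk i) (1 : ℝ))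

lemma finrank_coordSpan (hk : k ≤ d) : Module.finrank ℝ (coordSpan d k hk) = k := by
  have hli : LinearIndependent ℝ (fun i : Fin k =>
      EuclideanSpace.single (Fin.castLE hk i) (1 : ℝ)) := by
    have h := ((EuclideanSpace.basisFun (Fin d) ℝ).toBasis.linearIndependent).comp
      (Fin.castLE hk) (Fin.castLE_injective hk)
    have he : ∀ i : Fin k, ((EuclideanSpace.basisFun (Fin d) ℝ).toBasis ∘ Fin.castLE hk) i
        = EuclideanSpace.single (Fin.castLE hk i) (1 : ℝ) := by
      intro i
      simp [Function.comp, EuclideanSpace.basisFun_apply]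
    exact funext he ▸ h
  rw [coordSpan, finrank_span_eq_card hli, Fintype.card_fin]

lemma coordSpan_tail_zero (hk : k ≤ d) {x : EuclideanSpace ℝ (Fin d)}
    (hx : x ∈ coordSpan d k hk) : ∀ j : Fin d, k ≤ (j : ℕ) → x j = 0 := by
  induction hx using Submodule.span_induction with
  | mem y hy =>
    obtain ⟨i, rfl⟩ := hy
    intro j hj
    show EuclideanSpace.single (Fin.castLE hk i) (1:ℝ) j = 0
    rw [EuclideanSpace.single_apply]
    have : j ≠ Fin.castLE hk i := by
      intro h
      have : (j : ℕ) = (i : ℕ) := by rw [h]; simp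
      omega
    simp [this]
  | zero => intro j hj; simp
  | add y z _ _ hy hz => intro j hj; have := hy j hj; have := hz j hj; simp [*]
  | smul c y _ hy => intro j hj; have := hy j hj; simp [*]

end Aux

section Main
variable {d m : ℕ}

lemma norm_proj (hmd : m ≤ d) {y : EuclideanSpace ℝ (Fin d)}
    (hy : ∀ j : Fin d, m ≤ (j : ℕ) → y j = 0) :
    ‖Matrix.toEuclideanLin (projMat d m) y‖ = ‖y‖ := by
  have key : ∀ i : Fin m, (Matrix.toEuclideanLin (projMat d m) y) i = y (Fin.castLE hmd i) := by
    intro i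
    rw [Matrix.toEuclideanLin_apply, PiLp.toLp_apply]
    show ∑ j, projMat d m i j * (WithLp.equiv 2 (Fin d → ℝ) y) j = _
    have h1 : ∀ j : Fin d, projMat d m i j * (WithLp.equiv 2 (Fin d → ℝ) y) j
        = if j = Fin.castLE hmd i then y j else 0 := by
      intro j
      by_cases h : j = Fin.castLE hmd i
      · subst h; simp [projMat]
      · have h' : ¬ ((i : ℕ) = (j : ℕ)) := fun hc => h (Fin.ext (by simpa using hc.symm))
        simp [projMat, h, h']
    simp_rw [h1]
    simp
  have hsum : ∑ i : Fin m, ‖(Matrix.toEuclideanLin (projMat d m) y) i‖ ^ 2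
      = ∑ j : Fin d, ‖y j‖ ^ 2 := by
    calc ∑ i : Fin m, ‖(Matrix.toEuclideanLin (projMat d m) y) i‖ ^ 2
        = ∑ i : Fin m, ‖y (Fin.castLE hmd i)‖ ^ 2 := by simp_rw [key]
      _ = ∑ j ∈ Finset.univ.map (Fin.castLEEmb hmd), ‖y j‖ ^ 2 := by
          rw [Finset.sum_map]; simp
      _ = ∑ j : Fin d, ‖y j‖ ^ 2 := by
          apply Finset.sum_subset (Finset.subset_univ _)
          intro j _ hj
          have hmj : m ≤ (j : ℕ) := by
            by_contra h
            push_neg at h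
            exact hj (Finset.mem_map.mpr ⟨⟨(j : ℕ), h⟩, Finset.mem_univ _, Fin.ext (by simp)⟩)
          rw [hy j hmj]
          simp
  rw [EuclideanSpace.norm_eq, EuclideanSpace.norm_eq, hsum]

lemma exists_unit_mem {V : Submodule ℝ (EuclideanSpace ℝ (Fin d))}
    (hV : 0 < Module.finrank ℝ V) : ∃ x : EuclideanSpace ℝ (Fin d), x ∈ V ∧ ‖x‖ = 1 := by
  have : Nontrivial V := Module.nontrivial_of_finrank_pos hV
  obtain ⟨⟨x, hxV⟩, hx0⟩ := exists_ne (0 : V)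
  have hx0' : x ≠ 0 := fun h => hx0 (Subtype.ext h)
  exact ⟨(‖x‖⁻¹ : ℝ) • x, V.smul_mem _ hxV, norm_smul_inv_norm hx0'⟩

lemma singVal_last_le (T : Matrix (Fin d) (Fin d) ℝ) {x : EuclideanSpace ℝ (Fin d)}
    (hx1 : ‖x‖ = 1) : singVal T d ≤ ‖Matrix.toEuclideanLin T x‖ := by
  have hx0 : x ≠ 0 := by intro h; rw [h, norm_zero] at hx1; norm_num at hx1
  have hsp : Module.finrank ℝ (ℝ ∙ x) = d + 1 - d := by
    rw [finrank_span_singleton hx0]; omega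
  unfold singVal
  refine le_trans (ciInf_le (bddBelow_aux T d) ⟨ℝ ∙ x, hsp⟩) ?_
  refine Real.iSup_le ?_ (norm_nonneg _)
  rintro ⟨y, hy, hy1⟩
  obtain ⟨c, rfl⟩ := Submodule.mem_span_singleton.mp hy
  have hc : |c| = 1 := by rwa [norm_smul, hx1, mul_one, Real.norm_eq_abs] at hy1
  show ‖Matrix.toEuclideanLin T (c • x)‖ ≤ _
  rw [_root_.map_smul, norm_smul, Real.norm_eq_abs, hc, one_mul]

lemma singVal_ge_aux {k : ℕ} (T : Matrix (Fin k) (Fin d) ℝ) {l : ℕ} (hl : 1 ≤ l) (hld : l ≤ d) {c : ℝ}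
    (h : ∀ V : Submodule ℝ (EuclideanSpace ℝ (Fin d)), Module.finrank ℝ V = d + 1 - l →
      c ≤ ⨆ x : {x : EuclideanSpace ℝ (Fin d) // x ∈ V ∧ ‖x‖ = 1},
        ‖Matrix.toEuclideanLin T x‖) : c ≤ singVal T l := by
  have hne : Nonempty {V : Submodule ℝ (EuclideanSpace ℝ (Fin d)) //
      Module.finrank ℝ V = d + 1 - l} :=
    ⟨⟨coordSpan d (d + 1 - l) (by omega), finrank_coordSpan (by omega)⟩⟩
  unfold singVal
  exact le_ciInf fun V => h V.1 V.2

end Main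

section Main2
variable {d m : ℕ}

lemma singVal_last_pos (hd : 1 ≤ d) (T : Matrix (Fin d) (Fin d) ℝ) (hT : IsUnit T) :
    0 < singVal T d := by
  set C := ‖LinearMap.toContinuousLinearMap (Matrix.toEuclideanLin (T⁻¹))‖ with hC
  have hdet := (Matrix.isUnit_iff_isUnit_det T).mp hT
  have hTT : T⁻¹ * T = 1 := Matrix.nonsing_inv_mul T hdet
  have hkey : ∀ x : EuclideanSpace ℝ (Fin d), ‖x‖ = 1 →
      1 ≤ C * ‖Matrix.toEuclideanLin T x‖ := by
    intro x hx
    calc (1 : ℝ) = ‖x‖ := hx.symm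
      _ = ‖Matrix.toEuclideanLin (T⁻¹) (Matrix.toEuclideanLin T x)‖ := by
          rw [← toEuclideanLin_mul_apply_aux, hTT]
          simp [Matrix.toEuclideanLin_apply]
      _ ≤ C * ‖Matrix.toEuclideanLin T x‖ := norm_toEuclideanLin_le _ _
  have hCpos : 0 < C := by
    obtain ⟨x, -, hx⟩ := exists_unit_mem (V := (⊤ : Submodule ℝ (EuclideanSpace ℝ (Fin d))))
      (by rw [finrank_top, finrank_euclideanSpace_fin]; exact hd)
    nlinarith [hkey x hx, norm_nonneg (Matrix.toEuclideanLin T x),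
      norm_toEuclideanLin_le T x, hx, norm_nonneg
        (LinearMap.toContinuousLinearMap (Matrix.toEuclideanLin T))]
  refine lt_of_lt_of_le (inv_pos.mpr hCpos) ?_
  refine singVal_ge_aux T hd le_rfl ?_
  intro V hV
  have hVpos : 0 < Module.finrank ℝ V := by rw [hV]; omega
  obtain ⟨x, hxV, hx1⟩ := exists_unit_mem hVpos
  have h2 : C⁻¹ ≤ ‖Matrix.toEuclideanLin T x‖ := by
    have h3 := hkey x hx1
    calc C⁻¹ = C⁻¹ * 1 := (mul_one _).symm
      _ ≤ C⁻¹ * (C * ‖Matrix.toEuclideanLin T x‖) :=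
          mul_le_mul_of_nonneg_left h3 (inv_nonneg.mpr hCpos.le)
      _ = ‖Matrix.toEuclideanLin T x‖ := by field_simp
  exact le_trans h2 (le_ciSup (bddAbove_aux T V) ⟨x, hxV, hx1⟩)

lemma singVal_last_le_first (hd : 1 ≤ d) (T : Matrix (Fin d) (Fin d) ℝ) :
    singVal T d ≤ singVal T 1 := by
  refine singVal_ge_aux T le_rfl hd ?_
  intro V hV
  have hVpos : 0 < Module.finrank ℝ V := by rw [hV]; omega
  obtain ⟨x, hxV, hx1⟩ := exists_unit_mem hVpos
  exact le_trans (singVal_last_le T hx1) (le_ciSup (bddAbove_aux T V) ⟨x, hxV, hx1⟩)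

lemma singVal_last_le_proj (hm : 1 ≤ m) (hmd : m ≤ d) (T : Matrix (Fin d) (Fin d) ℝ)
    (hT : IsUnit T) : singVal T d ≤ singVal (projMat d m * T) m := by
  have hdet := (Matrix.isUnit_iff_isUnit_det T).mp hT
  have hTT : T⁻¹ * T = 1 := Matrix.nonsing_inv_mul T hdet
  have hTT' : T * T⁻¹ = 1 := Matrix.mul_nonsing_inv T hdet
  have hid : ∀ A B : Matrix (Fin d) (Fin d) ℝ, A * B = 1 →
      Matrix.toEuclideanLin A ∘ₗ Matrix.toEuclideanLin B = LinearMap.id := by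
    intro A B hAB
    apply LinearMap.ext
    intro x
    rw [LinearMap.comp_apply, ← toEuclideanLin_mul_apply_aux, hAB]
    simp [Matrix.toEuclideanLin_apply]
  let fe : EuclideanSpace ℝ (Fin d) ≃ₗ[ℝ] EuclideanSpace ℝ (Fin d) :=
    LinearEquiv.ofLinear (Matrix.toEuclideanLin T) (Matrix.toEuclideanLin T⁻¹)
      (hid _ _ hTT') (hid _ _ hTT)
  refine singVal_ge_aux (projMat d m * T) hm hmd ?_
  intro V hV
  set W := coordSpan d m hmd with hW
  set E := Submodule.comap (fe : EuclideanSpace ℝ (Fin d) →ₗ[ℝ] EuclideanSpace ℝ (Fin d)) W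
    with hE
  have hErank : Module.finrank ℝ E = m := by
    rw [hE, Submodule.comap_equiv_eq_map_symm, LinearEquiv.finrank_map_eq,
      finrank_coordSpan]
  have hsum := Submodule.finrank_sup_add_finrank_inf_eq V E
  have hle : Module.finrank ℝ ↥(V ⊔ E) ≤ d :=
    le_trans (Submodule.finrank_le _) (by simp [finrank_euclideanSpace_fin])
  have hinter : 0 < Module.finrank ℝ ↥(V ⊓ E) := by omega
  obtain ⟨x, hxVE, hx1⟩ := exists_unit_mem hinter
  obtain ⟨hxV, hxE⟩ := Submodule.mem_inf.mp hxVE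
  have hfxW : Matrix.toEuclideanLin T x ∈ W := by
    have := Submodule.mem_comap.mp hxE
    simpa [fe, LinearEquiv.ofLinear_apply] using this
  have hfx : ∀ j : Fin d, m ≤ (j : ℕ) → (Matrix.toEuclideanLin T x) j = 0 :=
    coordSpan_tail_zero hmd hfxW
  have heq : ‖Matrix.toEuclideanLin (projMat d m * T) x‖ = ‖Matrix.toEuclideanLin T x‖ := by
    rw [toEuclideanLin_mul_apply_aux, norm_proj hmd hfx]
  calc singVal T d ≤ ‖Matrix.toEuclideanLin T x‖ := singVal_last_le T hx1
    _ = ‖Matrix.toEuclideanLin (projMat d m * T) x‖ := heq.symm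
    _ ≤ _ := le_ciSup (bddAbove_aux (projMat d m * T) V) ⟨x, hxV, hx1⟩

end Main2

/-- For `1 ≤ m ≤ d` and an invertible `d × d` matrix `T`,
`α_m(π ∘ T) ≥ α_1(T)^{1-m} · α_d(T)^m`. -/
theorem singVal_proj_comp_lower_bound {d m : ℕ} (hm : 1 ≤ m) (hmd : m ≤ d)
    (T : Matrix (Fin d) (Fin d) ℝ) (hT : IsUnit T) :
    singVal T 1 ^ (1 - (m : ℤ)) * singVal T d ^ (m : ℤ) ≤ singVal (projMat d m * T) m := by
  have hd : 1 ≤ d := le_trans hm hmd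
  set a := singVal T 1 with ha
  set b := singVal T d with hb
  have hbpos : 0 < b := singVal_last_pos hd T hT
  have hba : b ≤ a := singVal_last_le_first hd T
  have hapos : 0 < a := lt_of_lt_of_le hbpos hba
  have hmain : b ≤ singVal (projMat d m * T) m := singVal_last_le_proj hm hmd T hT
  refine le_trans ?_ hmain
  obtain ⟨n, rfl⟩ : ∃ n, m = n + 1 := ⟨m - 1, by omega⟩
  have h1 : (1 - ((n + 1 : ℕ) : ℤ)) = -(n : ℤ) := by push_cast; ring
  have h2 : (((n + 1 : ℕ)) : ℤ) = (n : ℤ) + 1 := by push_cast; ring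
  rw [h1, h2, _root_.zpow_neg, zpow_natCast, zpow_add_one₀ (ne_of_gt hbpos), zpow_natCast]
  have hpow : b ^ n ≤ a ^ n := pow_le_pow_left₀ hbpos.le hba n
  calc (a ^ n)⁻¹ * (b ^ n * b) ≤ (a ^ n)⁻¹ * (a ^ n * b) := by
        apply mul_le_mul_of_nonneg_left _ (inv_nonneg.mpr (pow_nonneg hapos.le n))
        exact mul_le_mul_of_nonneg_right hpow hbpos.le
    _ = b := by field_simp
end

section
/- Let x_1,...,x_k and y_1,...,y_k be two families of linearly independent vectors in ℝ^m. Then the lines spanned by x_1∧...∧x_k and y_1∧...∧y_k in Λ^k ℝ^m coincide if and only if span{x_1,...,x_k} = span{y_1,...,y_k}. -/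
open ExteriorAlgebra

/-- A module-valued alternating map in `ι` variables on a module with a basis indexed by `ι`
equals the determinant with respect to that basis, `smulRight` its value on the basis. -/
lemma alt_eq_det_smulRight {R M N ι : Type*} [CommRing R] [AddCommGroup M] [Module R M]
    [AddCommGroup N] [Module R N] [Fintype ι] [DecidableEq ι]
    (e : Module.Basis ι R M) (f : M [⋀^ι]→ₗ[R] N) : f = e.det.smulRight (f e) := by
  refine Module.Basis.ext_alternating e fun i h => ?_
  let σ : Equiv.Perm ι := Equiv.ofBijective i (Finite.injective_iff_bijective.1 h)
  change f (e ∘ σ) = e.det.smulRight (f e) (e ∘ σ)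
  rw [AlternatingMap.smulRight_apply, AlternatingMap.map_perm, AlternatingMap.map_perm,
    Module.Basis.det_self]
  simp

/-- The wedge of a linearly independent family is nonzero. -/
lemma iMulti_ne_zero_of_linearIndependent {m k : ℕ} {v : Fin k → EuclideanSpace ℝ (Fin m)}
    (hv : LinearIndependent ℝ v) : ExteriorAlgebra.ιMulti ℝ k v ≠ 0 := by
  set W := Submodule.span ℝ (Set.range v) with hW
  let b : Module.Basis (Fin k) ℝ W := Module.Basis.span hv
  let π : EuclideanSpace ℝ (Fin m) →ₗ[ℝ] W := (Submodule.orthogonalProjectionOnto W).toLinearMap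
  let f : (EuclideanSpace ℝ (Fin m)) [⋀^Fin k]→ₗ[ℝ] ℝ := b.det.compLinearMap π
  have hπv : (π ∘ v) = b := by
    funext i
    have hmem : v i ∈ W := Submodule.subset_span ⟨i, rfl⟩
    have : π (v i) = (⟨v i, hmem⟩ : W) := Submodule.orthogonalProjectionOnto_mem_subspace_eq_self ⟨v i, hmem⟩
    rw [Function.comp_apply, this]
    exact (Module.Basis.span_apply hv i).symm
  have hf : f v = 1 := by
    rw [AlternatingMap.compLinearMap_apply]
    rw [show (fun i => π (v i)) = b from hπv]
    exact b.det_self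
  intro h
  have := congrArg (ExteriorAlgebra.liftAlternating (R := ℝ) (Pi.single k f)) h
  rw [ExteriorAlgebra.liftAlternating_apply_ιMulti, Pi.single_eq_same, hf, map_zero] at this
  exact one_ne_zero this

/-- Membership criterion: `u ∈ span x` iff `ι u ∧ x₁ ∧ ⋯ ∧ xₖ = 0`. -/
lemma iota_mul_iMulti_eq_zero_iff {m k : ℕ} {x : Fin k → EuclideanSpace ℝ (Fin m)}
    (hx : LinearIndependent ℝ x) (u : EuclideanSpace ℝ (Fin m)) :
    ExteriorAlgebra.ι ℝ u * ExteriorAlgebra.ιMulti ℝ k x = 0 ↔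
      u ∈ Submodule.span ℝ (Set.range x) := by
  have key : ExteriorAlgebra.ιMulti ℝ (k + 1) (Fin.cons u x) =
      ExteriorAlgebra.ι ℝ u * ExteriorAlgebra.ιMulti ℝ k x := by
    rw [ExteriorAlgebra.ιMulti_succ_apply]
    have h1 : Matrix.vecTail (Fin.cons u x) = x := funext fun i => by
      simp [Matrix.vecTail]
    rw [h1]
    rfl
  constructor
  · intro h
    by_contra hu
    have hli : LinearIndependent ℝ (Fin.cons u x) := linearIndependent_fin_cons.2 ⟨hx, hu⟩
    exact iMulti_ne_zero_of_linearIndependent hli (key.trans h)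
  · intro h
    have hdep : ¬ LinearIndependent ℝ (Fin.cons u x) := fun hli =>
      (linearIndependent_fin_cons.1 hli).2 h
    rw [← key]
    exact AlternatingMap.map_linearDependent _ _ hdep

/-- Plücker embedding is injective: for linearly independent families `x_1,...,x_k` and
`y_1,...,y_k` in `ℝ^m`, the lines spanned by `x_1∧...∧x_k` and `y_1∧...∧y_k` in `⋀^k ℝ^m`
coincide if and only if `span{x_1,...,x_k} = span{y_1,...,y_k}`. -/
theorem wedge_span_eq_iff_span_eq {m k : ℕ} (x y : Fin k → EuclideanSpace ℝ (Fin m))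
    (hx : LinearIndependent ℝ x) (hy : LinearIndependent ℝ y) :
    Submodule.span ℝ {ExteriorAlgebra.ιMulti ℝ k x} =
        Submodule.span ℝ {ExteriorAlgebra.ιMulti ℝ k y} ↔
      Submodule.span ℝ (Set.range x) = Submodule.span ℝ (Set.range y) := by
  have hax := iMulti_ne_zero_of_linearIndependent hx
  have hay := iMulti_ne_zero_of_linearIndependent hy
  constructor
  · intro h
    -- get scalars relating the two wedges
    have hbmem : ExteriorAlgebra.ιMulti ℝ k y ∈
        Submodule.span ℝ {ExteriorAlgebra.ιMulti ℝ k x} := by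
      rw [h]; exact Submodule.mem_span_singleton_self _
    obtain ⟨c, hc⟩ := Submodule.mem_span_singleton.1 hbmem
    have hcne : c ≠ 0 := by
      rintro rfl; rw [zero_smul] at hc; exact hay hc.symm
    have hamem : ExteriorAlgebra.ιMulti ℝ k x ∈
        Submodule.span ℝ {ExteriorAlgebra.ιMulti ℝ k y} := by
      rw [← h]; exact Submodule.mem_span_singleton_self _
    obtain ⟨d, hd⟩ := Submodule.mem_span_singleton.1 hamem
    have hdne : d ≠ 0 := by
      rintro rfl; rw [zero_smul] at hd; exact hax hd.symm
    apply le_antisymm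
    · rw [Submodule.span_le]
      rintro _ ⟨i, rfl⟩
      simp only [SetLike.mem_coe]
      rw [← iota_mul_iMulti_eq_zero_iff hy (x i)]
      have h0 : ExteriorAlgebra.ι ℝ (x i) * ExteriorAlgebra.ιMulti ℝ k x = 0 :=
        (iota_mul_iMulti_eq_zero_iff hx (x i)).2 (Submodule.subset_span ⟨i, rfl⟩)
      have := congrArg (ExteriorAlgebra.ι ℝ (x i) * ·) hd
      simp only [mul_smul_comm, h0] at this
      exact (smul_eq_zero.1 this).resolve_left hdne
    · rw [Submodule.span_le]
      rintro _ ⟨i, rfl⟩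
      simp only [SetLike.mem_coe]
      rw [← iota_mul_iMulti_eq_zero_iff hx (y i)]
      have h0 : ExteriorAlgebra.ι ℝ (y i) * ExteriorAlgebra.ιMulti ℝ k y = 0 :=
        (iota_mul_iMulti_eq_zero_iff hy (y i)).2 (Submodule.subset_span ⟨i, rfl⟩)
      have := congrArg (ExteriorAlgebra.ι ℝ (y i) * ·) hc
      simp only [mul_smul_comm, h0] at this
      exact (smul_eq_zero.1 this).resolve_left hcne
  · intro h
    set W := Submodule.span ℝ (Set.range x) with hW
    let b : Module.Basis (Fin k) ℝ W := Module.Basis.span hx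
    have hymem : ∀ i, y i ∈ W := fun i => h ▸ Submodule.subset_span ⟨i, rfl⟩
    let y' : Fin k → W := fun i => ⟨y i, hymem i⟩
    let G : W [⋀^Fin k]→ₗ[ℝ] ExteriorAlgebra ℝ (EuclideanSpace ℝ (Fin m)) :=
      (ExteriorAlgebra.ιMulti ℝ k).compLinearMap W.subtype
    have hGb : G b = ExteriorAlgebra.ιMulti ℝ k x := by
      rw [AlternatingMap.compLinearMap_apply]
      congr 1
      funext i
      exact congrArg Subtype.val (Module.Basis.span_apply hx i)
    have hGy : G y' = ExteriorAlgebra.ιMulti ℝ k y := by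
      rw [AlternatingMap.compLinearMap_apply]
      rfl
    have key : ExteriorAlgebra.ιMulti ℝ k y = b.det y' • ExteriorAlgebra.ιMulti ℝ k x := by
      rw [← hGb, ← hGy, alt_eq_det_smulRight b G, AlternatingMap.smulRight_apply,
        AlternatingMap.smulRight_apply]
      simp [Module.Basis.det_self]
    have hcne : b.det y' ≠ 0 := by
      intro h0
      rw [h0, zero_smul] at key
      exact hay key
    rw [key]
    exact (Submodule.span_singleton_smul_eq (isUnit_iff_ne_zero.2 hcne) _).symm
end

section
/- Let X be a topological space, let θ_1 and θ_2 be Borel probability measures on ℝ^m (with m ≥ 1) that are not mutually singular. Then for every ε > 0 there exists a Borel set F ⊆ ℝ^m such that θ_1(F) > 0, θ_2(F) > 0, and the total variation distance between the normalized restrictions (θ_1)_F := θ_1(F)^{-1}·θ_1|_F and (θ_2)_F := θ_2(F)^{-1}·θ_2|_F is less than ε. -/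
open MeasureTheory
open scoped ENNReal

/-- The total variation distance `‖μ - ν‖_TV = sup{(μ-ν)(E) - (μ-ν)(Eᶜ) : E measurable}`
between two (finite) measures. -/
noncomputable def tvDist {X : Type*} [MeasurableSpace X] (μ ν : Measure X) : ℝ :=
  ⨆ E : {E : Set X // MeasurableSet E},
    (((μ E.1).toReal - (ν E.1).toReal) - ((μ E.1ᶜ).toReal - (ν E.1ᶜ).toReal))

private lemma toReal_sub_le_aux {x y : ℝ≥0∞} {δ : ℝ} (hδ : 0 ≤ δ)
    (hx : x ≤ 1) (hy : y ≤ 1) (hxy : x ≤ ENNReal.ofReal (1 + δ) * y) :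
    x.toReal - y.toReal ≤ δ := by
  have hy' : y ≠ ∞ := (hy.trans_lt ENNReal.one_lt_top).ne
  have h1 : x.toReal ≤ (1 + δ) * y.toReal := by
    have := ENNReal.toReal_mono (ENNReal.mul_ne_top ENNReal.ofReal_ne_top hy') hxy
    rwa [ENNReal.toReal_mul, ENNReal.toReal_ofReal (by linarith)] at this
  have hy1 : y.toReal ≤ 1 := by
    have := ENNReal.toReal_mono (by simp) hy
    simpa using this
  nlinarith [ENNReal.toReal_nonneg (a := y)]

/-- If `θ₁, θ₂` are Borel probability measures on `ℝ^m` which are not mutually singular,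
then for every `ε > 0` there is a Borel set `F` with `θ₁(F) > 0`, `θ₂(F) > 0` and
`d_TV((θ₁)_F, (θ₂)_F) < ε`, where `(θ)_F = θ(F)⁻¹·θ|_F` is the normalized restriction. -/
theorem exists_set_tvDist_restrict_lt {m : ℕ}
    (θ₁ θ₂ : Measure (EuclideanSpace ℝ (Fin m)))
    [IsProbabilityMeasure θ₁] [IsProbabilityMeasure θ₂]
    (h : ¬ θ₁ ⟂ₘ θ₂) {ε : ℝ} (hε : 0 < ε) :
    ∃ F : Set (EuclideanSpace ℝ (Fin m)), MeasurableSet F ∧ 0 < θ₁ F ∧ 0 < θ₂ F ∧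
      tvDist ((θ₁ F)⁻¹ • θ₁.restrict F) ((θ₂ F)⁻¹ • θ₂.restrict F) < ε := by
  classical
  haveI : θ₁.HaveLebesgueDecomposition θ₂ := Measure.haveLebesgueDecomposition_of_sigmaFinite θ₁ θ₂
  set f := θ₁.rnDeriv θ₂ with hfdef
  have hfm : Measurable f := Measure.measurable_rnDeriv _ _
  obtain ⟨s, hsm, hs1, hs2⟩ := Measure.mutuallySingular_singularPart θ₁ θ₂
  set δ : ℝ := ε / 4 with hδdef
  have hδ0 : 0 < δ := by positivity
  set r : ℝ≥0∞ := ENNReal.ofReal (1 + δ) with hrdef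
  have hr1 : 1 < r := by
    rw [hrdef, ← ENNReal.ofReal_one]
    exact ENNReal.ofReal_lt_ofReal_iff (by linarith) |>.mpr (by linarith)
  have hrtop : r ≠ ∞ := ENNReal.ofReal_ne_top
  have hr0 : r ≠ 0 := (zero_lt_one.trans hr1).ne'
  -- θ₂ gives positive mass to {0 < f}
  have hG : 0 < θ₂ {x | 0 < f x} := by
    rcases eq_zero_or_pos (θ₂ {x | 0 < f x}) with h0 | h0
    · exfalso
      have hae : f =ᵐ[θ₂] 0 := by
        refine measure_mono_null (fun x hx => ?_) h0
        simp only [Set.mem_setOf_eq] at hx ⊢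
        exact pos_iff_ne_zero.mpr hx
      have : θ₂.withDensity f = 0 := by
        rw [withDensity_congr_ae hae, withDensity_zero]
      have hθ1 : θ₁ = θ₁.singularPart θ₂ := by
        conv_lhs => rw [← Measure.singularPart_add_rnDeriv θ₁ θ₂]
        rw [← hfdef, this, add_zero]
      exact h (hθ1 ▸ Measure.mutuallySingular_singularPart θ₁ θ₂)
    · exact h0
  -- restrict to where f is finite and within s
  set G' : Set (EuclideanSpace ℝ (Fin m)) := {x | 0 < f x ∧ f x < ∞} ∩ s with hG'def
  have hG'pos : 0 < θ₂ G' := by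
    have htop : θ₂ {x | ¬ f x < ∞} = 0 := by
      have := Measure.rnDeriv_lt_top θ₁ θ₂
      rw [MeasureTheory.ae_iff] at this
      exact this
    have hsub : {x | 0 < f x} ⊆ G' ∪ ({x | ¬ f x < ∞} ∪ sᶜ) := by
      intro x hx
      by_cases h1 : f x < ∞
      · by_cases h2 : x ∈ s
        · exact Or.inl ⟨⟨hx, h1⟩, h2⟩
        · exact Or.inr (Or.inr h2)
      · exact Or.inr (Or.inl h1)
    have h2 : θ₂ ({x | ¬ f x < ∞} ∪ sᶜ) = 0 :=
      measure_union_null htop hs2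
    rcases eq_zero_or_pos (θ₂ G') with h0 | h0
    · exfalso
      have : θ₂ {x | 0 < f x} = 0 :=
        measure_mono_null hsub (measure_union_null h0 h2)
      exact absurd this hG.ne'
    · exact h0
  -- level sets
  set A : ℤ → Set (EuclideanSpace ℝ (Fin m)) :=
    fun n => (f ⁻¹' Set.Ico (r ^ n) (r ^ (n + 1))) ∩ s with hAdef
  have hAm : ∀ n, MeasurableSet (A n) := fun n =>
    (hfm measurableSet_Ico).inter hsm
  have hcover : G' ⊆ ⋃ n, A n := by
    rintro x ⟨⟨hx0, hxtop⟩, hxs⟩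
    obtain ⟨n, hn⟩ := ENNReal.exists_mem_Ico_zpow hx0.ne' hxtop.ne hr1 hrtop
    exact Set.mem_iUnion.mpr ⟨n, ⟨hn, hxs⟩⟩
  obtain ⟨n, hn⟩ : ∃ n, 0 < θ₂ (A n) := by
    by_contra hc
    push_neg at hc
    simp only [le_zero_iff] at hc
    have : θ₂ (⋃ n, A n) = 0 := measure_iUnion_null hc
    exact absurd (measure_mono_null hcover this) hG'pos.ne'
  set F := A n with hFdef
  have hFm : MeasurableSet F := hAm n
  set a : ℝ≥0∞ := r ^ n with hadef
  set b : ℝ≥0∞ := r ^ (n + 1) with hbdef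
  have ha0 : a ≠ 0 := (ENNReal.zpow_pos hr0 hrtop n).ne'
  have hatop : a ≠ ∞ := (ENNReal.zpow_lt_top hr0 hrtop n).ne
  have hba : b = a * r := by
    rw [hbdef, hadef, ENNReal.zpow_add hr0 hrtop n 1, zpow_one]
  -- θ₁ on subsets of F is given by the density
  have hθ1_eq : ∀ E : Set (EuclideanSpace ℝ (Fin m)), MeasurableSet E →
      θ₁ (E ∩ F) = ∫⁻ x in E ∩ F, f x ∂θ₂ := by
    intro E hE
    have hEF : MeasurableSet (E ∩ F) := hE.inter hFm
    have hsing : θ₁.singularPart θ₂ (E ∩ F) = 0 := by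
      refine measure_mono_null ?_ hs1
      exact (Set.inter_subset_right).trans Set.inter_subset_right
    conv_lhs => rw [← Measure.singularPart_add_rnDeriv θ₁ θ₂]
    rw [Measure.add_apply, hsing, zero_add, withDensity_apply _ hEF]
  -- bounds
  have hlow : ∀ E : Set (EuclideanSpace ℝ (Fin m)), MeasurableSet E →
      a * θ₂ (E ∩ F) ≤ θ₁ (E ∩ F) := by
    intro E hE
    rw [hθ1_eq E hE, ← setLIntegral_const (E ∩ F) a]
    refine setLIntegral_mono hfm fun x hx => ?_
    exact hx.2.1.1
  have hhigh : ∀ E : Set (EuclideanSpace ℝ (Fin m)), MeasurableSet E →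
      θ₁ (E ∩ F) ≤ b * θ₂ (E ∩ F) := by
    intro E hE
    rw [hθ1_eq E hE, ← setLIntegral_const (E ∩ F) b]
    refine setLIntegral_mono measurable_const fun x hx => ?_
    exact hx.2.1.2.le
  have hθ1F : 0 < θ₁ F := by
    have := hlow Set.univ MeasurableSet.univ
    rw [Set.univ_inter] at this
    exact lt_of_lt_of_le (ENNReal.mul_pos ha0 hn.ne') this
  have hθ1Ftop : θ₁ F ≠ ∞ := (measure_lt_top θ₁ F).ne
  have hθ2Ftop : θ₂ F ≠ ∞ := (measure_lt_top θ₂ F).ne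
  refine ⟨F, hFm, hθ1F, hn, ?_⟩
  -- key comparison
  have key1 : ∀ E : Set (EuclideanSpace ℝ (Fin m)), MeasurableSet E →
      (θ₁ F)⁻¹ * θ₁ (E ∩ F) ≤ r * ((θ₂ F)⁻¹ * θ₂ (E ∩ F)) := by
    intro E hE
    have h1 : (θ₁ F)⁻¹ ≤ a⁻¹ * (θ₂ F)⁻¹ := by
      rw [← ENNReal.mul_inv (Or.inl ha0) (Or.inl hatop)]
      refine ENNReal.inv_le_inv.mpr ?_
      have := hlow Set.univ MeasurableSet.univ
      rwa [Set.univ_inter] at this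
    calc (θ₁ F)⁻¹ * θ₁ (E ∩ F) ≤ (a⁻¹ * (θ₂ F)⁻¹) * ((a * r) * θ₂ (E ∩ F)) :=
          mul_le_mul' h1 (hba ▸ hhigh E hE)
      _ = (a⁻¹ * a) * (r * ((θ₂ F)⁻¹ * θ₂ (E ∩ F))) := by ring
      _ = r * ((θ₂ F)⁻¹ * θ₂ (E ∩ F)) := by
          rw [ENNReal.inv_mul_cancel ha0 hatop, one_mul]
  have key2 : ∀ E : Set (EuclideanSpace ℝ (Fin m)), MeasurableSet E →
      (θ₂ F)⁻¹ * θ₂ (E ∩ F) ≤ r * ((θ₁ F)⁻¹ * θ₁ (E ∩ F)) := by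
    intro E hE
    have h1 : (θ₂ F)⁻¹ ≤ (a * r) * (θ₁ F)⁻¹ := by
      have hF : θ₁ F ≤ (a * r) * θ₂ F := by
        have := hhigh Set.univ MeasurableSet.univ
        rwa [Set.univ_inter, hba] at this
      have h2 : (a * r)⁻¹ * θ₁ F ≤ θ₂ F := by
        have := mul_le_mul_right hF ((a * r)⁻¹)
        rwa [← mul_assoc, ENNReal.inv_mul_cancel (by exact mul_ne_zero ha0 hr0)
          (ENNReal.mul_ne_top hatop hrtop), one_mul] at this
      calc (θ₂ F)⁻¹ ≤ ((a * r)⁻¹ * θ₁ F)⁻¹ := ENNReal.inv_le_inv.mpr h2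
        _ = (a * r) * (θ₁ F)⁻¹ := by
            rw [ENNReal.mul_inv (Or.inr hθ1Ftop) (Or.inr hθ1F.ne'), inv_inv]
    have h2 : θ₂ (E ∩ F) ≤ a⁻¹ * θ₁ (E ∩ F) := by
      have := mul_le_mul_right (hlow E hE) (a⁻¹)
      rwa [← mul_assoc, ENNReal.inv_mul_cancel ha0 hatop, one_mul] at this
    calc (θ₂ F)⁻¹ * θ₂ (E ∩ F) ≤ ((a * r) * (θ₁ F)⁻¹) * (a⁻¹ * θ₁ (E ∩ F)) :=
          mul_le_mul' h1 h2
      _ = (a⁻¹ * a) * (r * ((θ₁ F)⁻¹ * θ₁ (E ∩ F))) := by ring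
      _ = r * ((θ₁ F)⁻¹ * θ₁ (E ∩ F)) := by
          rw [ENNReal.inv_mul_cancel ha0 hatop, one_mul]
  have hone1 : ∀ E : Set (EuclideanSpace ℝ (Fin m)), (θ₁ F)⁻¹ * θ₁ (E ∩ F) ≤ 1 := by
    intro E
    calc (θ₁ F)⁻¹ * θ₁ (E ∩ F) ≤ (θ₁ F)⁻¹ * θ₁ F :=
          mul_le_mul_right (measure_mono Set.inter_subset_right) _
      _ = 1 := ENNReal.inv_mul_cancel hθ1F.ne' hθ1Ftop
  have hone2 : ∀ E : Set (EuclideanSpace ℝ (Fin m)), (θ₂ F)⁻¹ * θ₂ (E ∩ F) ≤ 1 := by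
    intro E
    calc (θ₂ F)⁻¹ * θ₂ (E ∩ F) ≤ (θ₂ F)⁻¹ * θ₂ F :=
          mul_le_mul_right (measure_mono Set.inter_subset_right) _
      _ = 1 := ENNReal.inv_mul_cancel hn.ne' hθ2Ftop
  -- the tvDist bound
  have hbound : tvDist ((θ₁ F)⁻¹ • θ₁.restrict F) ((θ₂ F)⁻¹ • θ₂.restrict F) ≤ ε / 2 := by
    rw [tvDist]
    refine Real.iSup_le (fun E => ?_) (by linarith)
    obtain ⟨E, hE⟩ := E
    simp only [Measure.smul_apply, smul_eq_mul, Measure.restrict_apply hE,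
      Measure.restrict_apply hE.compl]
    have t1 : ((θ₁ F)⁻¹ * θ₁ (E ∩ F)).toReal - ((θ₂ F)⁻¹ * θ₂ (E ∩ F)).toReal ≤ δ :=
      toReal_sub_le_aux hδ0.le (hone1 E) (hone2 E) (key1 E hE)
    have t2 : ((θ₂ F)⁻¹ * θ₂ (Eᶜ ∩ F)).toReal - ((θ₁ F)⁻¹ * θ₁ (Eᶜ ∩ F)).toReal ≤ δ :=
      toReal_sub_le_aux hδ0.le (hone2 Eᶜ) (hone1 Eᶜ) (key2 Eᶜ hE.compl)
    have : δ + δ = ε / 2 := by rw [hδdef]; ring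
    linarith
  linarith
end

section
/- Let m ≥ 2, 1 ≤ l < m and ε > 0. Then there exists δ > 0 such that for every line W ∈ Gr_1(m) and every V ∈ Gr_l(m) with κ(W, V^⊥) ≤ δ, the subspace V is within distance ε (in the metric d_{Gr_l}) of some l-dimensional subspace of W^⊥. -/
/-- The orthogonal projection onto a subspace `K` of `ℝ^m`, as an endomorphism of `ℝ^m`. -/
noncomputable def projL {m : ℕ} (K : Submodule ℝ (EuclideanSpace ℝ (Fin m))) :
    EuclideanSpace ℝ (Fin m) →L[ℝ] EuclideanSpace ℝ (Fin m) :=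
  K.subtypeL.comp K.orthogonalProjectionOnto

/-- `κ(V₁,V₂)`: the infimum over lines `L₁ ⊆ V₁`, `L₂ ⊆ V₂` of the projective distance
`‖P_{L₁} − P_{L₂}‖_op`. -/
noncomputable def kappa {m : ℕ} (V₁ V₂ : Submodule ℝ (EuclideanSpace ℝ (Fin m))) : ℝ :=
  ⨅ p : {L : Submodule ℝ (EuclideanSpace ℝ (Fin m)) // L ≤ V₁ ∧ Module.finrank ℝ L = 1} ×
      {L : Submodule ℝ (EuclideanSpace ℝ (Fin m)) // L ≤ V₂ ∧ Module.finrank ℝ L = 1},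
    ‖projL p.1.1 - projL p.2.1‖

section helpers

variable {m : ℕ} (K : Submodule ℝ (EuclideanSpace ℝ (Fin m)))

lemma projL_apply_mem (x : EuclideanSpace ℝ (Fin m)) : projL K x ∈ K :=
  (K.orthogonalProjectionOnto x).2

lemma projL_eq_self {x : EuclideanSpace ℝ (Fin m)} (h : x ∈ K) : projL K x = x := by
  exact (Submodule.starProjection_eq_self_iff (K := K)).2 h

lemma projL_eq_zero {x : EuclideanSpace ℝ (Fin m)} (h : x ∈ Kᗮ) : projL K x = 0 := by
  simp [projL, Submodule.orthogonalProjectionOnto_apply_of_mem_orthogonal h]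

lemma norm_projL_apply_le (x : EuclideanSpace ℝ (Fin m)) : ‖projL K x‖ ≤ ‖x‖ := by
  have := (K.orthogonalProjectionOnto).le_opNorm x
  calc ‖projL K x‖ = ‖K.orthogonalProjectionOnto x‖ := rfl
    _ ≤ ‖K.orthogonalProjectionOnto‖ * ‖x‖ := this
    _ ≤ 1 * ‖x‖ := by
        exact mul_le_mul_of_nonneg_right (Submodule.orthogonalProjectionOnto_norm_le K) (norm_nonneg x)
    _ = ‖x‖ := one_mul _

lemma projL_decomp (x : EuclideanSpace ℝ (Fin m)) : x = projL K x + projL Kᗮ x := by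
  exact (K.starProjection_add_starProjection_orthogonal x).symm

lemma projL_min {x u : EuclideanSpace ℝ (Fin m)} (hu : u ∈ K) :
    ‖x - projL K x‖ ≤ ‖x - u‖ := by
  rw [show ‖x - projL K x‖ = ‖x - K.starProjection x‖ from rfl,
    Submodule.starProjection_minimal]
  exact ciInf_le_of_le ⟨0, by rintro r ⟨y, rfl⟩; positivity⟩ (⟨u, hu⟩ : K) le_rfl

lemma projL_selfAdjoint : IsSelfAdjoint (projL K) :=
  isSelfAdjoint_starProjection K

end helpers

set_option maxHeartbeats 1000000
open ContinuousLinearMap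

/-- Let `m ≥ 2`, `1 ≤ l < m`, `ε > 0`. Then there is `δ > 0` such that for every line
`W ∈ Gr_1(m)` and every `V ∈ Gr_l(m)` with `κ(W, V^⊥) ≤ δ`, the subspace `V` is within
distance `ε` (in the metric `d_{Gr_l}(V,U) = ‖P_V − P_U‖_op`) of some `l`-dimensional
subspace of `W^⊥`. -/
theorem exists_delta_close_to_subspace_of_perp {m l : ℕ} (hm : 2 ≤ m) (hl : 1 ≤ l)
    (hlm : l < m) {ε : ℝ} (hε : 0 < ε) :
    ∃ δ : ℝ, 0 < δ ∧ ∀ W V : Submodule ℝ (EuclideanSpace ℝ (Fin m)),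
      Module.finrank ℝ W = 1 → Module.finrank ℝ V = l →
      kappa W Vᗮ ≤ δ →
      ∃ U : Submodule ℝ (EuclideanSpace ℝ (Fin m)),
        U ≤ Wᗮ ∧ Module.finrank ℝ U = l ∧ ‖projL V - projL U‖ < ε := by
  set E := EuclideanSpace ℝ (Fin m)
  refine ⟨min (ε/8) (1/8), lt_min (by positivity) (by norm_num), fun W V hW hV hκ => ?_⟩
  set δ := min (ε/8) (1/8) with hδdef
  have hδpos : 0 < δ := lt_min (by positivity) (by norm_num)
  have hδ8 : δ ≤ ε/8 := min_le_left _ _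
  have hδ18 : δ ≤ 1/8 := min_le_right _ _
  -- there is a line in `Vᗮ`
  have hVperp : Module.finrank ℝ Vᗮ = m - l := by
    have h := V.finrank_add_finrank_orthogonal
    rw [hV, finrank_euclideanSpace_fin] at h; omega
  have hne : Vᗮ ≠ ⊥ := by
    intro h
    rw [h, finrank_bot] at hVperp; omega
  obtain ⟨v', hv'mem, hv'ne⟩ := Submodule.ne_bot_iff _ |>.1 hne
  haveI : Nonempty
      ({L : Submodule ℝ E // L ≤ W ∧ Module.finrank ℝ L = 1} ×
       {L : Submodule ℝ E // L ≤ Vᗮ ∧ Module.finrank ℝ L = 1}) :=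
    ⟨⟨⟨W, le_rfl, hW⟩,
      ⟨Submodule.span ℝ {v'}, by rwa [Submodule.span_singleton_le_iff_mem],
        finrank_span_singleton hv'ne⟩⟩⟩
  -- extract a near-optimal pair of lines
  obtain ⟨p, hp⟩ := exists_lt_of_ciInf_lt (lt_of_le_of_lt hκ (by linarith : δ < 2*δ))
  obtain ⟨⟨L₁, hL₁W, hL₁r⟩, L₂'⟩ := p
  obtain ⟨L₂, hL₂V, hL₂r⟩ := L₂'
  have hL₁ : L₁ = W := Submodule.eq_of_le_of_finrank_eq hL₁W (by rw [hL₁r, hW])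
  have hp' : ‖projL L₁ - projL L₂‖ < 2*δ := hp
  rw [hL₁] at hp'
  -- the key estimate : ‖P_W P_V y‖ ≤ 2δ‖y‖
  have hVL₂ : V ≤ L₂ᗮ :=
    (Submodule.le_orthogonal_orthogonal V).trans (Submodule.orthogonal_le hL₂V)
  have hkey : ∀ y : E, ‖projL W (projL V y)‖ ≤ 2*δ*‖y‖ := by
    intro y
    have h0 : projL L₂ (projL V y) = 0 := projL_eq_zero _ (hVL₂ (projL_apply_mem V y))
    calc ‖projL W (projL V y)‖ = ‖(projL W - projL L₂) (projL V y)‖ := by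
          rw [ContinuousLinearMap.sub_apply, h0, sub_zero]
      _ ≤ ‖projL W - projL L₂‖ * ‖projL V y‖ := le_opNorm _ _
      _ ≤ (2*δ) * ‖y‖ :=
          mul_le_mul hp'.le (norm_projL_apply_le _ _) (norm_nonneg _) (by linarith)
  -- the candidate subspace
  set g : V →ₗ[ℝ] E := ((projL Wᗮ).toLinearMap).comp V.subtype with hg
  have hgapp : ∀ v : V, g v = projL Wᗮ (v : E) := fun v => rfl
  have hginj : Function.Injective g := by
    rw [injective_iff_map_eq_zero]
    intro v hv
    rw [hgapp] at hv
    have hd := projL_decomp W (v : E)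
    rw [hv, add_zero] at hd
    have h2 : ‖(v:E)‖ ≤ 2*δ*‖(v:E)‖ := by
      calc ‖(v:E)‖ = ‖projL W (projL V (v:E))‖ := by rw [projL_eq_self V v.2, ← hd]
        _ ≤ 2*δ*‖(v:E)‖ := hkey _
    have : ‖(v:E)‖ ≤ 0 := by nlinarith [norm_nonneg (v:E)]
    have : (v:E) = 0 := norm_le_zero_iff.1 this
    exact Subtype.ext this
  refine ⟨LinearMap.range g, ?_, ?_, ?_⟩
  · rintro _ ⟨v, rfl⟩
    exact projL_apply_mem Wᗮ (v : E)
  · rw [LinearMap.finrank_range_of_inj hginj, hV]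
  -- the norm estimate
  set U := LinearMap.range g with hU
  have hmemU : ∀ x : E, x ∈ V → projL Wᗮ x ∈ U := fun x hx => ⟨⟨x, hx⟩, rfl⟩
  have hA : ‖(1 - projL U) ∘L projL V‖ ≤ 2*δ := by
    refine opNorm_le_bound _ (by positivity) fun x => ?_
    have h1 : projL Wᗮ (projL V x) ∈ U := hmemU _ (projL_apply_mem V x)
    have hd := projL_decomp W (projL V x)
    calc ‖((1 - projL U) ∘L projL V) x‖
        = ‖projL V x - projL U (projL V x)‖ := by
          simp [ContinuousLinearMap.comp_apply, ContinuousLinearMap.sub_apply]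
      _ ≤ ‖projL V x - projL Wᗮ (projL V x)‖ := projL_min U h1
      _ = ‖projL W (projL V x)‖ := by
          generalize hc : projL W (projL V x) = c at hd ⊢
          generalize hb : projL Wᗮ (projL V x) = b at hd ⊢
          rw [hd]; simp
      _ ≤ 2*δ*‖x‖ := hkey x
  have hB : ‖(1 - projL V) ∘L projL U‖ ≤ 3*δ := by
    refine opNorm_le_bound _ (by positivity) fun x => ?_
    obtain ⟨v, hv⟩ : projL U x ∈ U := projL_apply_mem U x
    rw [hgapp] at hv
    have hvV : projL V (v:E) = (v:E) := projL_eq_self V v.2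
    have hPW : ‖projL W (v:E)‖ ≤ 2*δ*‖(v:E)‖ := by
      have := hkey (v:E); rwa [hvV] at this
    have hd := projL_decomp W (v:E)
    rw [hv] at hd
    have hnv : ‖(v:E)‖ ≤ ‖projL W (v:E)‖ + ‖projL U x‖ := by
      calc ‖(v:E)‖ = ‖projL W (v:E) + projL U x‖ := by rw [← hd]
        _ ≤ _ := norm_add_le _ _
    have hux : ‖projL U x‖ ≤ ‖x‖ := norm_projL_apply_le U x
    have hvx : ‖(v:E)‖ ≤ (3/2)*‖x‖ := by nlinarith [norm_nonneg (v:E), norm_nonneg x]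
    calc ‖((1 - projL V) ∘L projL U) x‖
        = ‖projL U x - projL V (projL U x)‖ := by
          simp [ContinuousLinearMap.comp_apply, ContinuousLinearMap.sub_apply]
      _ ≤ ‖projL U x - (v:E)‖ := projL_min V v.2
      _ = ‖projL W (v:E)‖ := by
          have h3 : projL U x - (v:E) = -(projL W ((v:E))) := by
            generalize projL W (v:E) = c at hd ⊢
            rw [hd]; abel
          rw [h3, norm_neg]
      _ ≤ 2*δ*‖(v:E)‖ := hPW
      _ ≤ 3*δ*‖x‖ := by
          have := mul_le_mul_of_nonneg_left hvx hδpos.le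
          nlinarith [norm_nonneg x]
  have hsplit : projL V - projL U
      = (projL V ∘L (1 - projL U)) - ((1 - projL V) ∘L projL U) := by
    refine ContinuousLinearMap.ext fun x => ?_
    simp only [ContinuousLinearMap.sub_apply, ContinuousLinearMap.comp_apply,
      ContinuousLinearMap.one_apply, map_sub]
    abel
  have hadj : ‖projL V ∘L (1 - projL U)‖ = ‖(1 - projL U) ∘L projL V‖ := by
    have h1 : ContinuousLinearMap.adjoint (projL V) = projL V :=
      ContinuousLinearMap.isSelfAdjoint_iff'.1 (projL_selfAdjoint V)
    have h2 : ContinuousLinearMap.adjoint ((1 : E →L[ℝ] E) - projL U) = 1 - projL U := by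
      rw [map_sub, ContinuousLinearMap.isSelfAdjoint_iff'.1 (projL_selfAdjoint U),
        ← ContinuousLinearMap.star_eq_adjoint, star_one]
    calc ‖projL V ∘L (1 - projL U)‖
        = ‖ContinuousLinearMap.adjoint (projL V ∘L (1 - projL U))‖ :=
          (LinearIsometryEquiv.norm_map ContinuousLinearMap.adjoint _).symm
      _ = ‖(1 - projL U) ∘L projL V‖ := by
          rw [ContinuousLinearMap.adjoint_comp, h1, h2]
  calc ‖projL V - projL U‖
      ≤ ‖projL V ∘L (1 - projL U)‖ + ‖(1 - projL V) ∘L projL U‖ := by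
        rw [hsplit]; exact norm_sub_le _ _
    _ ≤ 2*δ + 3*δ := by rw [hadj]; exact add_le_add hA hB
    _ < ε := by linarith
end

section
/- Let (X,F,θ) be a probability space and let D, E be countable measurable partitions of X such that each atom of E meets at most C atoms of D (C ≥ 1). Then for any probability measure ξ on (X,F), |H(θ, D | E) − H(ξ, D | E)| ≤ 1 + d_TV(θ,ξ)·log C, where H(·, D | E) denotes conditional Shannon entropy and d_TV is total variation distance. -/
open MeasureTheory

/-- A countable (ℕ-indexed) measurable partition of `X`. -/
def IsCountPartition {X : Type*} [MeasurableSpace X] (D : ℕ → Set X) : Prop :=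
  (∀ n, MeasurableSet (D n)) ∧ (∀ i j, i ≠ j → Disjoint (D i) (D j)) ∧ (⋃ n, D n) = Set.univ

/-- The Shannon entropy (base 2) of a measure with respect to a countable partition. -/
noncomputable def entPart {X : Type*} [MeasurableSpace X] (θ : Measure X)
    (D : ℕ → Set X) : ℝ :=
  ∑' n, -((θ (D n)).toReal * Real.logb 2 (θ (D n)).toReal)

/-- The conditional entropy `H(θ, D | E) = Σ_{E'} θ(E')·H(θ_{E'}, D)`, where `θ_{E'}` is
the normalized restriction of `θ` to the atom `E'`. -/
noncomputable def condEntPart {X : Type*} [MeasurableSpace X] (θ : Measure X)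
    (D E : ℕ → Set X) : ℝ :=
  ∑' j, (θ (E j)).toReal * entPart ((θ (E j))⁻¹ • θ.restrict (E j)) D

/-- Column entropy (natural log): `∑_{i∈T} v i * log ((∑ v)/ v i)`. -/
noncomputable def colEnt (T : Finset ℕ) (v : ℕ → ℝ) : ℝ :=
  ∑ i ∈ T, v i * Real.log ((∑ k ∈ T, v k) / v i)

lemma colEnt_congr {T : Finset ℕ} {v w : ℕ → ℝ} (h : ∀ i ∈ T, v i = w i) :
    colEnt T v = colEnt T w := by
  unfold colEnt
  rw [Finset.sum_congr rfl h]
  exact Finset.sum_congr rfl fun i hi => by rw [h i hi]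

/-- log-sum inequality, "concave" form. -/
lemma logsum2 {a b x y : ℝ} (ha : 0 ≤ a) (hb : 0 ≤ b) (hx : 0 < x) (hy : 0 < y) :
    a * Real.log (x / a) + b * Real.log (y / b) ≤ (a + b) * Real.log ((x + y) / (a + b)) := by
  rcases eq_or_lt_of_le ha with h0 | ha'
  · subst h0
    rcases eq_or_lt_of_le hb with h0' | hb'
    · subst h0'; simp
    · have : b * Real.log (y / b) ≤ b * Real.log ((x + y) / b) := by
        apply mul_le_mul_of_nonneg_left _ hb
        exact Real.log_le_log (by positivity) (by gcongr; linarith)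
      simpa using this
  rcases eq_or_lt_of_le hb with h0' | hb'
  · subst h0'
    have : a * Real.log (x / a) ≤ a * Real.log ((x + y) / a) := by
      apply mul_le_mul_of_nonneg_left _ ha
      exact Real.log_le_log (by positivity) (by gcongr; linarith)
    simpa using this
  -- both positive
  set c : ℝ := (a + b) / (x + y) with hc
  have hcpos : 0 < c := by positivity
  have key : ∀ u v : ℝ, 0 < u → 0 < v →
      u * Real.log (v / u) ≤ -(u * Real.log c) + c * v - u := by
    intro u v hu hv
    have h1 : Real.log (v * c / u) ≤ v * c / u - 1 :=
      Real.log_le_sub_one_of_pos (by positivity)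
    have h2 : Real.log (v * c / u) = Real.log (v / u) + Real.log c := by
      rw [Real.log_div (by positivity) hu.ne', Real.log_mul hv.ne' hcpos.ne',
        Real.log_div hv.ne' hu.ne']
      ring
    have h3 : u * Real.log (v * c / u) ≤ v * c - u := by
      have := mul_le_mul_of_nonneg_left h1 hu.le
      have hq : u * (v * c / u - 1) = v * c - u := by field_simp
      linarith [hq ▸ this]
    nlinarith [h3, h2]
  have k1 := key a x ha' hx
  have k2 := key b y hb' hy
  have hce : c * (x + y) = a + b := by rw [hc]; field_simp
  have hxy : (x + y) / (a + b) = c⁻¹ := by rw [hc, inv_div]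
  have hrhs : (a + b) * Real.log ((x + y) / (a + b)) = -((a + b) * Real.log c) := by
    rw [hxy, Real.log_inv]; ring
  rw [hrhs]
  nlinarith [k1, k2, hce]

lemma colEnt_nonneg {T : Finset ℕ} {v : ℕ → ℝ} (hv : ∀ i ∈ T, 0 ≤ v i) :
    0 ≤ colEnt T v := by
  apply Finset.sum_nonneg
  intro i hi
  rcases eq_or_lt_of_le (hv i hi) with h0 | hpos
  · simp [← h0]
  · apply mul_nonneg hpos.le
    apply Real.log_nonneg
    rw [le_div_iff₀ hpos, one_mul]
    exact Finset.single_le_sum hv hi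

lemma colEnt_le {T : Finset ℕ} {v : ℕ → ℝ} (hv : ∀ i ∈ T, 0 ≤ v i)
    {n : ℕ} (hn : T.card ≤ n) :
    colEnt T v ≤ (∑ i ∈ T, v i) * Real.log n := by
  classical
  set s := ∑ i ∈ T, v i with hs
  have hs0 : 0 ≤ s := Finset.sum_nonneg hv
  rcases eq_or_lt_of_le hs0 with h0 | hspos
  · have hz : ∀ i ∈ T, v i = 0 := by
      intro i hi
      exact (Finset.sum_eq_zero_iff_of_nonneg hv).mp h0.symm i hi
    have : colEnt T v = 0 := Finset.sum_eq_zero fun i hi => by simp [hz i hi]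
    rw [this, ← h0]; simp
  · set T' := T.filter (fun i => v i ≠ 0) with hT'
    have hsubT : T' ⊆ T := Finset.filter_subset _ _
    have hpos' : ∀ i ∈ T', 0 < v i := by
      intro i hi
      rcases Finset.mem_filter.mp hi with ⟨hiT, hne⟩
      exact lt_of_le_of_ne (hv i hiT) (Ne.symm hne)
    have hsum' : ∑ i ∈ T', v i = s := by
      rw [hs]
      exact Finset.sum_filter_ne_zero T
    have hce : colEnt T v = ∑ i ∈ T', v i * Real.log (s / v i) := by
      unfold colEnt
      rw [← hs]
      refine (Finset.sum_filter_of_ne ?_).symm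
      intro i hi hne
      by_contra h0
      exact hne (by simp [h0])
    have hTne : T'.Nonempty := by
      by_contra hemp
      rw [Finset.not_nonempty_iff_eq_empty] at hemp
      rw [hemp] at hsum'
      simp at hsum'
      linarith
    have hcard : 0 < T'.card := Finset.card_pos.mpr hTne
    set n' : ℝ := (T'.card : ℝ) with hn'
    have hn'pos : 0 < n' := by rw [hn']; exact_mod_cast hcard
    have hterm : ∀ i ∈ T', v i * Real.log (s / v i) ≤ v i * Real.log n' + (s / n' - v i) := by
      intro i hi
      have hvi := hpos' i hi
      have h1 : Real.log (s / (v i * n')) ≤ s / (v i * n') - 1 :=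
        Real.log_le_sub_one_of_pos (by positivity)
      have h2 : Real.log (s / v i) = Real.log (s / (v i * n')) + Real.log n' := by
        rw [Real.log_div hspos.ne' hvi.ne', Real.log_div hspos.ne' (by positivity),
          Real.log_mul hvi.ne' hn'pos.ne']
        ring
      have h3 : v i * Real.log (s / (v i * n')) ≤ s / n' - v i := by
        have := mul_le_mul_of_nonneg_left h1 hvi.le
        have hq : v i * (s / (v i * n') - 1) = s / n' - v i := by field_simp
        linarith [hq ▸ this]
      nlinarith [h2, h3]
    have hsumle : colEnt T v ≤ ∑ i ∈ T', (v i * Real.log n' + (s / n' - v i)) := by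
      rw [hce]; exact Finset.sum_le_sum hterm
    have hexp : ∑ i ∈ T', (v i * Real.log n' + (s / n' - v i)) = s * Real.log n' := by
      rw [Finset.sum_add_distrib, ← Finset.sum_mul, hsum', Finset.sum_sub_distrib, hsum']
      rw [Finset.sum_const, nsmul_eq_mul, ← hn']
      field_simp
      ring
    have hmono : s * Real.log n' ≤ s * Real.log n := by
      apply mul_le_mul_of_nonneg_left _ hs0
      apply Real.log_le_log hn'pos
      rw [hn']
      exact_mod_cast le_trans (Finset.card_le_card hsubT) hn
    linarith [hsumle, hexp ▸ hsumle, hmono, hexp]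

lemma colEnt_eq {T : Finset ℕ} {v : ℕ → ℝ} (hv : ∀ i ∈ T, 0 ≤ v i) :
    colEnt T v = (∑ i ∈ T, v i) * Real.log (∑ i ∈ T, v i) - ∑ i ∈ T, v i * Real.log (v i) := by
  classical
  set s := ∑ i ∈ T, v i with hs
  have hterm : ∀ i ∈ T, v i * Real.log (s / v i) = v i * Real.log s - v i * Real.log (v i) := by
    intro i hi
    rcases eq_or_lt_of_le (hv i hi) with h0 | hpos
    · simp [← h0]
    · have hs0 : 0 < s := lt_of_lt_of_le hpos (Finset.single_le_sum hv hi)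
      rw [Real.log_div hs0.ne' hpos.ne']
      ring
  unfold colEnt
  rw [← hs, Finset.sum_congr rfl hterm, Finset.sum_sub_distrib, ← Finset.sum_mul]

lemma mul_log_superadd {a b : ℝ} (ha : 0 ≤ a) (hb : 0 ≤ b) :
    a * Real.log a + b * Real.log b ≤ (a + b) * Real.log (a + b) := by
  rcases eq_or_lt_of_le ha with h0 | ha'
  · subst h0; simp
  rcases eq_or_lt_of_le hb with h0' | hb'
  · subst h0'; simp
  have h1 : a * Real.log a ≤ a * Real.log (a + b) :=
    mul_le_mul_of_nonneg_left (Real.log_le_log ha' (by linarith)) ha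
  have h2 : b * Real.log b ≤ b * Real.log (a + b) :=
    mul_le_mul_of_nonneg_left (Real.log_le_log hb' (by linarith)) hb
  nlinarith [h1, h2]

lemma colEnt_superadd {T : Finset ℕ} {a b : ℕ → ℝ} (ha : ∀ i ∈ T, 0 ≤ a i)
    (hb : ∀ i ∈ T, 0 ≤ b i) :
    colEnt T a + colEnt T b ≤ colEnt T (fun i => a i + b i) := by
  classical
  set sa := ∑ i ∈ T, a i with hsa
  set sb := ∑ i ∈ T, b i with hsb
  have hsa0 : 0 ≤ sa := Finset.sum_nonneg ha
  have hsb0 : 0 ≤ sb := Finset.sum_nonneg hb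
  rcases eq_or_lt_of_le hsa0 with h0 | hsa'
  · have hz : ∀ i ∈ T, a i = 0 := (Finset.sum_eq_zero_iff_of_nonneg ha).mp h0.symm
    have h1 : colEnt T a = 0 := Finset.sum_eq_zero fun i hi => by simp [hz i hi]
    have h2 : colEnt T (fun i => a i + b i) = colEnt T b :=
      colEnt_congr fun i hi => by rw [hz i hi, zero_add]
    rw [h1, h2, zero_add]
  rcases eq_or_lt_of_le hsb0 with h0' | hsb'
  · have hz : ∀ i ∈ T, b i = 0 := (Finset.sum_eq_zero_iff_of_nonneg hb).mp h0'.symm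
    have h1 : colEnt T b = 0 := Finset.sum_eq_zero fun i hi => by simp [hz i hi]
    have h2 : colEnt T (fun i => a i + b i) = colEnt T a :=
      colEnt_congr fun i hi => by rw [hz i hi, add_zero]
    rw [h1, h2, add_zero]
  unfold colEnt
  rw [← Finset.sum_add_distrib]
  have hsum : ∑ k ∈ T, (a k + b k) = sa + sb := by
    rw [Finset.sum_add_distrib, ← hsa, ← hsb]
  rw [hsum, ← hsa, ← hsb]
  apply Finset.sum_le_sum
  intro i hi
  exact logsum2 (ha i hi) (hb i hi) hsa' hsb'

lemma colEnt_subadd {T : Finset ℕ} {a b : ℕ → ℝ} (ha : ∀ i ∈ T, 0 ≤ a i)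
    (hb : ∀ i ∈ T, 0 ≤ b i) :
    colEnt T (fun i => a i + b i) ≤ colEnt T a + colEnt T b +
      ((∑ i ∈ T, a i + ∑ i ∈ T, b i) * Real.log (∑ i ∈ T, a i + ∑ i ∈ T, b i)
        - (∑ i ∈ T, a i) * Real.log (∑ i ∈ T, a i)
        - (∑ i ∈ T, b i) * Real.log (∑ i ∈ T, b i)) := by
  classical
  have hab : ∀ i ∈ T, 0 ≤ a i + b i := fun i hi => add_nonneg (ha i hi) (hb i hi)
  rw [colEnt_eq hab, colEnt_eq ha, colEnt_eq hb]
  have hsum : ∑ i ∈ T, (a i + b i) = ∑ i ∈ T, a i + ∑ i ∈ T, b i :=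
    Finset.sum_add_distrib
  rw [hsum]
  have hcell : ∑ i ∈ T, (a i * Real.log (a i) + b i * Real.log (b i)) ≤
      ∑ i ∈ T, (a i + b i) * Real.log (a i + b i) :=
    Finset.sum_le_sum fun i hi => mul_log_superadd (ha i hi) (hb i hi)
  rw [Finset.sum_add_distrib] at hcell
  linarith [hcell]

lemma eps_nonneg {sa sb : ℝ} (ha : 0 ≤ sa) (hb : 0 ≤ sb) :
    0 ≤ (sa + sb) * Real.log (sa + sb) - sa * Real.log sa - sb * Real.log sb := by
  linarith [mul_log_superadd ha hb]

lemma eps_le {sa sb : ℝ} (ha : 0 ≤ sa) (hb : 0 ≤ sb) :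
    (sa + sb) * Real.log (sa + sb) - sa * Real.log sa - sb * Real.log sb
      ≤ (sa + sb) * Real.log 2 := by
  rcases eq_or_lt_of_le (add_nonneg ha hb) with h0 | hS
  · have h1 : sa = 0 := by linarith
    have h2 : sb = 0 := by linarith
    simp [h1, h2]
  set S := sa + sb with hS'
  have hls := logsum2 ha hb (show (0:ℝ) < S / 2 by positivity) (show (0:ℝ) < S / 2 by positivity)
  have hhalf : S / 2 + S / 2 = S := by ring
  rw [hhalf] at hls
  have hSS : S / S = 1 := div_self hS.ne'
  rw [← hS'] at hls
  rw [hSS, Real.log_one, mul_zero] at hls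
  -- hls : sa * log (S/2 / sa) + sb * log (S/2 / sb) ≤ 0
  have hterm : ∀ u : ℝ, 0 ≤ u → u * Real.log (S / u) ≤ u * Real.log (S / 2 / u) + u * Real.log 2 := by
    intro u hu
    rcases eq_or_lt_of_le hu with h0 | hu'
    · simp [← h0]
    · have : Real.log (S / u) = Real.log (S / 2 / u) + Real.log 2 := by
        rw [Real.log_div hS.ne' hu'.ne', Real.log_div (by positivity) hu'.ne',
          Real.log_div hS.ne' (by norm_num)]
        ring
      rw [this, mul_add]
  have h1 := hterm sa ha
  have h2 := hterm sb hb
  -- relate u * log(S/u) to the ε expression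
  have e1 : ∀ u : ℝ, 0 ≤ u → u * Real.log (S / u) = u * Real.log S - u * Real.log u := by
    intro u hu
    rcases eq_or_lt_of_le hu with h0 | hu'
    · simp [← h0]
    · rw [Real.log_div hS.ne' hu'.ne']; ring
  have ea := e1 sa ha
  have eb := e1 sb hb
  have hsum : sa * Real.log S + sb * Real.log S = S * Real.log S := by rw [hS']; ring
  have hsum2 : sa * Real.log 2 + sb * Real.log 2 = S * Real.log 2 := by rw [hS']; ring
  linarith [h1, h2, hls, ea, eb, hsum, hsum2]

/-- Main discrete inequality: conditional entropy of `m + r1` exceeds that of `m + r2`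
by at most `δ log C + log 2`, where `δ` is the total mass of `r1`. -/
lemma discrete_main (T : ℕ → Finset ℕ) {C : ℕ} (hC : 1 ≤ C) (hT : ∀ j, (T j).card ≤ C)
    (m r1 r2 : ℕ → ℕ → ℝ)
    (hm : ∀ i j, 0 ≤ m i j) (hr1 : ∀ i j, 0 ≤ r1 i j) (hr2 : ∀ i j, 0 ≤ r2 i j)
    (hsm : Summable (fun j => ∑ i ∈ T j, m i j))
    (hsr1 : Summable (fun j => ∑ i ∈ T j, r1 i j))
    (hsr2 : Summable (fun j => ∑ i ∈ T j, r2 i j))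
    (htot : (∑' j, (∑ i ∈ T j, m i j + ∑ i ∈ T j, r1 i j)) = 1)
    {δ : ℝ} (hδ : (∑' j, ∑ i ∈ T j, r1 i j) = δ) :
    (∑' j, colEnt (T j) (fun i => m i j + r1 i j))
      - (∑' j, colEnt (T j) (fun i => m i j + r2 i j))
      ≤ δ * Real.log C + Real.log 2 := by
  classical
  set sm : ℕ → ℝ := fun j => ∑ i ∈ T j, m i j with hsm'
  set s1 : ℕ → ℝ := fun j => ∑ i ∈ T j, r1 i j with hs1'
  set s2 : ℕ → ℝ := fun j => ∑ i ∈ T j, r2 i j with hs2'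
  have hsmnn : ∀ j, 0 ≤ sm j := fun j => Finset.sum_nonneg fun i _ => hm i j
  have hs1nn : ∀ j, 0 ≤ s1 j := fun j => Finset.sum_nonneg fun i _ => hr1 i j
  have hs2nn : ∀ j, 0 ≤ s2 j := fun j => Finset.sum_nonneg fun i _ => hr2 i j
  have hlogC : 0 ≤ Real.log C := Real.log_nonneg (by exact_mod_cast hC)
  -- column entropies
  set Fm : ℕ → ℝ := fun j => colEnt (T j) (fun i => m i j) with hFm'
  set F1 : ℕ → ℝ := fun j => colEnt (T j) (fun i => r1 i j) with hF1'
  set F2 : ℕ → ℝ := fun j => colEnt (T j) (fun i => r2 i j) with hF2'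
  set Fp : ℕ → ℝ := fun j => colEnt (T j) (fun i => m i j + r1 i j) with hFp'
  set Fq : ℕ → ℝ := fun j => colEnt (T j) (fun i => m i j + r2 i j) with hFq'
  set eps : ℕ → ℝ := fun j =>
    (sm j + s1 j) * Real.log (sm j + s1 j) - sm j * Real.log (sm j) - s1 j * Real.log (s1 j)
    with heps'
  -- pointwise facts
  have hFm_nn : ∀ j, 0 ≤ Fm j := fun j => colEnt_nonneg fun i _ => hm i j
  have hF1_nn : ∀ j, 0 ≤ F1 j := fun j => colEnt_nonneg fun i _ => hr1 i j
  have hF2_nn : ∀ j, 0 ≤ F2 j := fun j => colEnt_nonneg fun i _ => hr2 i j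
  have hFp_nn : ∀ j, 0 ≤ Fp j :=
    fun j => colEnt_nonneg fun i _ => add_nonneg (hm i j) (hr1 i j)
  have hFq_nn : ∀ j, 0 ≤ Fq j :=
    fun j => colEnt_nonneg fun i _ => add_nonneg (hm i j) (hr2 i j)
  have hFm_le : ∀ j, Fm j ≤ sm j * Real.log C :=
    fun j => colEnt_le (fun i _ => hm i j) (hT j)
  have hF1_le : ∀ j, F1 j ≤ s1 j * Real.log C :=
    fun j => colEnt_le (fun i _ => hr1 i j) (hT j)
  have hFp_le : ∀ j, Fp j ≤ (sm j + s1 j) * Real.log C := by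
    intro j
    have := colEnt_le (T := T j) (v := fun i => m i j + r1 i j)
      (fun i _ => add_nonneg (hm i j) (hr1 i j)) (hT j)
    rwa [Finset.sum_add_distrib] at this
  have hFq_le : ∀ j, Fq j ≤ (sm j + s2 j) * Real.log C := by
    intro j
    have := colEnt_le (T := T j) (v := fun i => m i j + r2 i j)
      (fun i _ => add_nonneg (hm i j) (hr2 i j)) (hT j)
    rwa [Finset.sum_add_distrib] at this
  have heps_nn : ∀ j, 0 ≤ eps j := fun j => eps_nonneg (hsmnn j) (hs1nn j)
  have heps_le : ∀ j, eps j ≤ (sm j + s1 j) * Real.log 2 :=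
    fun j => eps_le (hsmnn j) (hs1nn j)
  -- summabilities
  have hsm1 : Summable (fun j => sm j + s1 j) := hsm.add hsr1
  have hsm2 : Summable (fun j => sm j + s2 j) := hsm.add hsr2
  have hSFm : Summable Fm :=
    Summable.of_nonneg_of_le hFm_nn hFm_le (hsm.mul_right _)
  have hSF1 : Summable F1 :=
    Summable.of_nonneg_of_le hF1_nn hF1_le (hsr1.mul_right _)
  have hSFp : Summable Fp :=
    Summable.of_nonneg_of_le hFp_nn hFp_le (hsm1.mul_right _)
  have hSFq : Summable Fq :=
    Summable.of_nonneg_of_le hFq_nn hFq_le (hsm2.mul_right _)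
  have hSeps : Summable eps :=
    Summable.of_nonneg_of_le heps_nn heps_le (hsm1.mul_right _)
  -- (A) almost-subadditivity
  have hA : ∑' j, Fp j ≤ ∑' j, Fm j + ∑' j, F1 j + ∑' j, eps j := by
    have hptwise : ∀ j, Fp j ≤ Fm j + F1 j + eps j := by
      intro j
      exact colEnt_subadd (fun i _ => hm i j) (fun i _ => hr1 i j)
    calc ∑' j, Fp j ≤ ∑' j, (Fm j + F1 j + eps j) :=
          Summable.tsum_le_tsum hptwise hSFp ((hSFm.add hSF1).add hSeps)
      _ = ∑' j, Fm j + ∑' j, F1 j + ∑' j, eps j := by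
          rw [Summable.tsum_add (hSFm.add hSF1) hSeps, Summable.tsum_add hSFm hSF1]
  -- (B) concavity
  have hB : ∑' j, Fm j ≤ ∑' j, Fq j := by
    apply Summable.tsum_le_tsum _ hSFm hSFq
    intro j
    have h := colEnt_superadd (T := T j) (a := fun i => m i j) (b := fun i => r2 i j)
      (fun i _ => hm i j) (fun i _ => hr2 i j)
    have := hF2_nn j
    rw [hFm', hFq']
    dsimp only
    linarith [h, hF2_nn j]
  -- (C)
  have hC1 : ∑' j, F1 j ≤ δ * Real.log C := by
    calc ∑' j, F1 j ≤ ∑' j, s1 j * Real.log C :=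
          Summable.tsum_le_tsum hF1_le hSF1 (hsr1.mul_right _)
      _ = (∑' j, s1 j) * Real.log C := tsum_mul_right
      _ = δ * Real.log C := by rw [hδ]
  -- (D)
  have hD : ∑' j, eps j ≤ Real.log 2 := by
    calc ∑' j, eps j ≤ ∑' j, (sm j + s1 j) * Real.log 2 :=
          Summable.tsum_le_tsum heps_le hSeps (hsm1.mul_right _)
      _ = (∑' j, (sm j + s1 j)) * Real.log 2 := tsum_mul_right
      _ = Real.log 2 := by rw [htot, one_mul]
  linarith [hA, hB, hC1, hD]

lemma bridge {X : Type*} [MeasurableSpace X] (θ : Measure X) [IsProbabilityMeasure θ]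
    (D E : ℕ → Set X) (hD : IsCountPartition D) (hE : IsCountPartition E)
    (T : ℕ → Finset ℕ) (hT : ∀ j i, i ∉ T j → D i ∩ E j = ∅) :
    condEntPart θ D E
      = (Real.log 2)⁻¹ * ∑' j, colEnt (T j) (fun i => (θ (D i ∩ E j)).toReal) := by
  classical
  have hEeq : ∀ j, E j = ⋃ i, D i ∩ E j := by
    intro j; ext x; simp only [Set.mem_iUnion, Set.mem_inter_iff]
    constructor
    · intro hx
      have hx' : x ∈ ⋃ n, D n := by rw [hD.2.2]; trivial
      rcases Set.mem_iUnion.mp hx' with ⟨i, hi⟩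
      exact ⟨i, hi, hx⟩
    · rintro ⟨i, _, hx⟩; exact hx
  have hcellmeas : ∀ i j, MeasurableSet (D i ∩ E j) := fun i j => (hD.1 i).inter (hE.1 j)
  have hcelldisj : ∀ j, Pairwise (Function.onFun Disjoint (fun i => D i ∩ E j)) := by
    intro j i i' hne
    exact ((hD.2.1 i i' hne).mono Set.inter_subset_left Set.inter_subset_left)
  have hmarg : ∀ j, θ (E j) = ∑' i, θ (D i ∩ E j) := by
    intro j
    conv_lhs => rw [hEeq j]
    exact measure_iUnion (hcelldisj j) (fun i => hcellmeas i j)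
  have hmargR : ∀ j, (θ (E j)).toReal = ∑ i ∈ T j, (θ (D i ∩ E j)).toReal := by
    intro j
    rw [hmarg j, ENNReal.tsum_toReal_eq (fun i => measure_ne_top θ _)]
    exact tsum_eq_sum (fun i hi => by rw [hT j i hi]; simp)
  have hcol : ∀ j, (θ (E j)).toReal * entPart ((θ (E j))⁻¹ • θ.restrict (E j)) D
      = (Real.log 2)⁻¹ * colEnt (T j) (fun i => (θ (D i ∩ E j)).toReal) := by
    intro j
    by_cases hzero : θ (E j) = 0
    · have hcz : ∀ i, θ (D i ∩ E j) = 0 := by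
        intro i
        have h1 : θ (D i ∩ E j) ≤ θ (E j) := measure_mono Set.inter_subset_right
        rw [hzero] at h1
        exact le_antisymm h1 (zero_le)
      have hze : colEnt (T j) (fun i => (θ (D i ∩ E j)).toReal) = 0 :=
        Finset.sum_eq_zero fun i _ => by simp [hcz i]
      rw [hze, hzero]
      simp
    · set s := (θ (E j)).toReal with hsdef
      have hspos : 0 < s := ENNReal.toReal_pos hzero (measure_ne_top θ _)
      have happly : ∀ n, (((θ (E j))⁻¹ • θ.restrict (E j)) (D n)).toReal
          = (θ (D n ∩ E j)).toReal / s := by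
        intro n
        rw [Measure.smul_apply, Measure.restrict_apply (hD.1 n), smul_eq_mul,
          ENNReal.toReal_mul, ENNReal.toReal_inv, ← hsdef]
        rw [inv_mul_eq_div]
      have hent : entPart ((θ (E j))⁻¹ • θ.restrict (E j)) D
          = ∑ i ∈ T j, -(((θ (D i ∩ E j)).toReal / s)
              * Real.logb 2 ((θ (D i ∩ E j)).toReal / s)) := by
        unfold entPart
        rw [tsum_congr (fun n => by rw [happly n])]
        exact tsum_eq_sum (fun i hi => by rw [hT j i hi]; simp)
      rw [hent, Finset.mul_sum]
      unfold colEnt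
      rw [← hmargR j, ← hsdef, Finset.mul_sum]
      apply Finset.sum_congr rfl
      intro i _
      have hpnn : 0 ≤ (θ (D i ∩ E j)).toReal := ENNReal.toReal_nonneg
      rcases eq_or_lt_of_le hpnn with h0 | hppos
      · simp [← h0]
      · rw [Real.logb, Real.log_div hppos.ne' hspos.ne', Real.log_div hspos.ne' hppos.ne']
        have h2 : Real.log 2 ≠ 0 := by
          have := Real.log_pos (by norm_num : (1:ℝ) < 2)
          exact this.ne'
        field_simp
        ring
  unfold condEntPart
  rw [tsum_congr hcol, tsum_mul_left]

lemma discrete_combined (T : ℕ → Finset ℕ) {C : ℕ} (hC : 1 ≤ C) (hT : ∀ j, (T j).card ≤ C)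
    (p q : ℕ → ℕ → ℝ) (hp : ∀ i j, 0 ≤ p i j) (hq : ∀ i j, 0 ≤ q i j)
    (hps : Summable (fun j => ∑ i ∈ T j, p i j))
    (hqs : Summable (fun j => ∑ i ∈ T j, q i j))
    (hpt : (∑' j, ∑ i ∈ T j, p i j) = 1)
    (hqt : (∑' j, ∑ i ∈ T j, q i j) = 1)
    {δ : ℝ} (hδ : (∑' j, ∑ i ∈ T j, (p i j - min (p i j) (q i j))) = δ) :
    |(∑' j, colEnt (T j) (fun i => p i j)) - (∑' j, colEnt (T j) (fun i => q i j))|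
      ≤ δ * Real.log C + Real.log 2 := by
  classical
  set m : ℕ → ℕ → ℝ := fun i j => min (p i j) (q i j) with hmdef
  set r1 : ℕ → ℕ → ℝ := fun i j => p i j - m i j with hr1def
  set r2 : ℕ → ℕ → ℝ := fun i j => q i j - m i j with hr2def
  have hmnn : ∀ i j, 0 ≤ m i j := fun i j => le_min (hp i j) (hq i j)
  have hr1nn : ∀ i j, 0 ≤ r1 i j := fun i j => sub_nonneg.mpr (min_le_left _ _)
  have hr2nn : ∀ i j, 0 ≤ r2 i j := fun i j => sub_nonneg.mpr (min_le_right _ _)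
  -- column sums
  have hsm : Summable (fun j => ∑ i ∈ T j, m i j) := by
    apply Summable.of_nonneg_of_le
      (fun j => Finset.sum_nonneg fun i _ => hmnn i j)
      (fun j => Finset.sum_le_sum fun i _ => min_le_left _ _) hps
  have hcol1 : (fun j => ∑ i ∈ T j, r1 i j)
      = fun j => (∑ i ∈ T j, p i j) - ∑ i ∈ T j, m i j := by
    funext j
    rw [← Finset.sum_sub_distrib]
  have hcol2 : (fun j => ∑ i ∈ T j, r2 i j)
      = fun j => (∑ i ∈ T j, q i j) - ∑ i ∈ T j, m i j := by
    funext j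
    rw [← Finset.sum_sub_distrib]
  have hsr1 : Summable (fun j => ∑ i ∈ T j, r1 i j) := by
    rw [hcol1]; exact hps.sub hsm
  have hsr2 : Summable (fun j => ∑ i ∈ T j, r2 i j) := by
    rw [hcol2]; exact hqs.sub hsm
  have htsum1 : (∑' j, ∑ i ∈ T j, r1 i j) = 1 - ∑' j, ∑ i ∈ T j, m i j := by
    rw [hcol1, Summable.tsum_sub hps hsm, hpt]
  have htsum2 : (∑' j, ∑ i ∈ T j, r2 i j) = 1 - ∑' j, ∑ i ∈ T j, m i j := by
    rw [hcol2, Summable.tsum_sub hqs hsm, hqt]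
  have hδ1 : (∑' j, ∑ i ∈ T j, r1 i j) = δ := hδ
  have hδ2 : (∑' j, ∑ i ∈ T j, r2 i j) = δ := by rw [htsum2, ← htsum1, hδ1]
  -- totals
  have htotp : (∑' j, (∑ i ∈ T j, m i j + ∑ i ∈ T j, r1 i j)) = 1 := by
    have : (fun j => (∑ i ∈ T j, m i j) + ∑ i ∈ T j, r1 i j)
        = fun j => ∑ i ∈ T j, p i j := by
      funext j
      rw [← Finset.sum_add_distrib]
      exact Finset.sum_congr rfl fun i _ => by rw [hr1def]; ring
    rw [this, hpt]
  have htotq : (∑' j, (∑ i ∈ T j, m i j + ∑ i ∈ T j, r2 i j)) = 1 := by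
    have : (fun j => (∑ i ∈ T j, m i j) + ∑ i ∈ T j, r2 i j)
        = fun j => ∑ i ∈ T j, q i j := by
      funext j
      rw [← Finset.sum_add_distrib]
      exact Finset.sum_congr rfl fun i _ => by rw [hr2def]; ring
    rw [this, hqt]
  -- two applications of discrete_main
  have hA := discrete_main T hC hT m r1 r2 hmnn hr1nn hr2nn hsm hsr1 hsr2 htotp hδ1
  have hB := discrete_main T hC hT m r2 r1 hmnn hr2nn hr1nn hsm hsr2 hsr1 htotq hδ2
  -- rewrite the colEnt arguments
  have he1 : ∀ j, colEnt (T j) (fun i => m i j + r1 i j) = colEnt (T j) (fun i => p i j) :=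
    fun j => colEnt_congr fun i _ => by rw [hr1def]; ring
  have he2 : ∀ j, colEnt (T j) (fun i => m i j + r2 i j) = colEnt (T j) (fun i => q i j) :=
    fun j => colEnt_congr fun i _ => by rw [hr2def]; ring
  rw [tsum_congr he1, tsum_congr he2] at hA hB
  rw [abs_sub_le_iff]
  exact ⟨hA, hB⟩

/-- The cell `D i ∩ E j` indexed by the pair `z = (j, i)`. -/
def cellSet {X : Type*} (D E : ℕ → Set X) (z : ℕ × ℕ) : Set X := D z.2 ∩ E z.1

lemma cellSet_facts {X : Type*} [MeasurableSpace X] (D E : ℕ → Set X)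
    (hD : IsCountPartition D) (hE : IsCountPartition E) :
    (∀ z, MeasurableSet (cellSet D E z)) ∧
    Pairwise (Function.onFun Disjoint (cellSet D E)) ∧
    (⋃ z, cellSet D E z) = Set.univ := by
  refine ⟨fun z => (hD.1 z.2).inter (hE.1 z.1), ?_, ?_⟩
  · intro z z' hne
    rcases eq_or_ne z.1 z'.1 with h1 | h1
    · have h2 : z.2 ≠ z'.2 := fun h2 => hne (Prod.ext h1 h2)
      exact ((hD.2.1 _ _ h2).mono Set.inter_subset_left Set.inter_subset_left)
    · exact ((hE.2.1 _ _ h1).mono Set.inter_subset_right Set.inter_subset_right)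
  · apply Set.eq_univ_of_forall
    intro x
    have hx1 : x ∈ ⋃ n, D n := by rw [hD.2.2]; trivial
    have hx2 : x ∈ ⋃ n, E n := by rw [hE.2.2]; trivial
    rcases Set.mem_iUnion.mp hx1 with ⟨i, hi⟩
    rcases Set.mem_iUnion.mp hx2 with ⟨j, hj⟩
    exact Set.mem_iUnion.mpr ⟨(j, i), ⟨hi, hj⟩⟩

lemma marg_aux {X : Type*} [MeasurableSpace X] (θ : Measure X) [IsProbabilityMeasure θ]
    (D E : ℕ → Set X) (hD : IsCountPartition D) (hE : IsCountPartition E)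
    (T : ℕ → Finset ℕ) (hT : ∀ j i, i ∉ T j → D i ∩ E j = ∅) :
    Summable (fun j => ∑ i ∈ T j, (θ (D i ∩ E j)).toReal) ∧
    (∑' j, ∑ i ∈ T j, (θ (D i ∩ E j)).toReal) = 1 ∧
    Summable (fun z : ℕ × ℕ => (θ (cellSet D E z)).toReal) ∧
    (∑' z : ℕ × ℕ, θ (cellSet D E z)) = 1 := by
  obtain ⟨hcm, hcd, hcu⟩ := cellSet_facts D E hD hE
  have hEeq : ∀ j, E j = ⋃ i, D i ∩ E j := by
    intro j; ext x; simp only [Set.mem_iUnion, Set.mem_inter_iff]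
    constructor
    · intro hx
      have hx' : x ∈ ⋃ n, D n := by rw [hD.2.2]; trivial
      rcases Set.mem_iUnion.mp hx' with ⟨i, hi⟩
      exact ⟨i, hi, hx⟩
    · rintro ⟨i, _, hx⟩; exact hx
  have hcellmeas : ∀ i j, MeasurableSet (D i ∩ E j) := fun i j => (hD.1 i).inter (hE.1 j)
  have hcelldisj : ∀ j, Pairwise (Function.onFun Disjoint (fun i => D i ∩ E j)) := by
    intro j i i' hne
    exact ((hD.2.1 i i' hne).mono Set.inter_subset_left Set.inter_subset_left)
  have hmargR : ∀ j, (θ (E j)).toReal = ∑ i ∈ T j, (θ (D i ∩ E j)).toReal := by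
    intro j
    have hmarg : θ (E j) = ∑' i, θ (D i ∩ E j) := by
      conv_lhs => rw [hEeq j]
      exact measure_iUnion (hcelldisj j) (fun i => hcellmeas i j)
    rw [hmarg, ENNReal.tsum_toReal_eq (fun i => measure_ne_top θ _)]
    exact tsum_eq_sum (fun i hi => by rw [hT j i hi]; simp)
  have hEdisj : Pairwise (Function.onFun Disjoint E) := fun i j hne => hE.2.1 i j hne
  have hEtot : (∑' j, θ (E j)) = 1 := by
    rw [← measure_iUnion hEdisj hE.1, hE.2.2, measure_univ]
  have hScol : Summable (fun j => (θ (E j)).toReal) :=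
    ENNReal.summable_toReal (by rw [hEtot]; exact ENNReal.one_ne_top)
  have hptot : (∑' z : ℕ × ℕ, θ (cellSet D E z)) = 1 := by
    rw [← measure_iUnion hcd hcm, hcu, measure_univ]
  refine ⟨hScol.congr hmargR, ?_, ?_, hptot⟩
  · calc (∑' j, ∑ i ∈ T j, (θ (D i ∩ E j)).toReal)
        = ∑' j, (θ (E j)).toReal := tsum_congr fun j => (hmargR j).symm
      _ = (∑' j, θ (E j)).toReal :=
          (ENNReal.tsum_toReal_eq fun _ => measure_ne_top θ _).symm
      _ = 1 := by rw [hEtot]; simp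
  · exact ENNReal.summable_toReal (by rw [hptot]; exact ENNReal.one_ne_top)

lemma delta_le_tvDist {X : Type*} [MeasurableSpace X] (θ ξ : Measure X)
    [IsProbabilityMeasure θ] [IsProbabilityMeasure ξ]
    (D E : ℕ → Set X) (hD : IsCountPartition D) (hE : IsCountPartition E) :
    (∑' z : ℕ × ℕ, ((θ (cellSet D E z)).toReal
        - min (θ (cellSet D E z)).toReal (ξ (cellSet D E z)).toReal))
      ≤ tvDist θ ξ := by
  classical
  obtain ⟨hcm, hcd, hcu⟩ := cellSet_facts D E hD hE
  set fθ : ℕ × ℕ → ℝ := fun z => (θ (cellSet D E z)).toReal with hfθ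
  set fξ : ℕ × ℕ → ℝ := fun z => (ξ (cellSet D E z)).toReal with hfξ
  have hθtot : (∑' z : ℕ × ℕ, θ (cellSet D E z)) = 1 := by
    rw [← measure_iUnion hcd hcm, hcu, measure_univ]
  have hξtot : (∑' z : ℕ × ℕ, ξ (cellSet D E z)) = 1 := by
    rw [← measure_iUnion hcd hcm, hcu, measure_univ]
  have hSθ : Summable fθ :=
    ENNReal.summable_toReal (by rw [hθtot]; exact ENNReal.one_ne_top)
  have hSξ : Summable fξ :=
    ENNReal.summable_toReal (by rw [hξtot]; exact ENNReal.one_ne_top)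
  set G : Set (ℕ × ℕ) := {z | fξ z < fθ z} with hG
  set S : Set X := ⋃ z : G, cellSet D E z.val with hS
  have hSmeas : MeasurableSet S := MeasurableSet.iUnion fun z => hcm _
  have hsub : ∀ W : Set (ℕ × ℕ),
      Pairwise (Function.onFun Disjoint fun z : W => cellSet D E z.val) :=
    fun W a b hne => hcd (Subtype.coe_ne_coe.mpr hne)
  have happθ : ∀ W : Set (ℕ × ℕ), (θ (⋃ z : W, cellSet D E z.val)).toReal
      = ∑' z : ℕ × ℕ, W.indicator fθ z := by
    intro W
    rw [measure_iUnion (hsub W) (fun z => hcm _),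
      ENNReal.tsum_toReal_eq (fun z => measure_ne_top θ _)]
    exact tsum_subtype W fθ
  have happξ : ∀ W : Set (ℕ × ℕ), (ξ (⋃ z : W, cellSet D E z.val)).toReal
      = ∑' z : ℕ × ℕ, W.indicator fξ z := by
    intro W
    rw [measure_iUnion (hsub W) (fun z => hcm _),
      ENNReal.tsum_toReal_eq (fun z => measure_ne_top ξ _)]
    exact tsum_subtype W fξ
  have hScomp : Sᶜ = ⋃ z : ↥Gᶜ, cellSet D E z.val := by
    ext x
    simp only [Set.mem_compl_iff]
    constructor
    · intro hxc
      have hx : x ∈ ⋃ z, cellSet D E z := by rw [hcu]; trivial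
      rcases Set.mem_iUnion.mp hx with ⟨z, hz⟩
      have hzG : z ∉ G := by
        intro hzG
        exact hxc (Set.mem_iUnion.mpr ⟨⟨z, hzG⟩, hz⟩)
      exact Set.mem_iUnion.mpr ⟨⟨z, hzG⟩, hz⟩
    · intro hx hxS
      rcases Set.mem_iUnion.mp hx with ⟨⟨z, hzn⟩, hz⟩
      rcases Set.mem_iUnion.mp hxS with ⟨⟨z', hz'⟩, hzz⟩
      rcases eq_or_ne z z' with rfl | hne
      · exact hzn hz'
      · exact Set.disjoint_left.mp (hcd hne) hz hzz
  have h1 : (θ S).toReal - (ξ S).toReal = ∑' z, (fθ z - min (fθ z) (fξ z)) := by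
    rw [hS, happθ G, happξ G, ← Summable.tsum_sub (hSθ.indicator G) (hSξ.indicator G)]
    apply tsum_congr
    intro z
    by_cases hz : z ∈ G
    · have hlt : fξ z < fθ z := by
        rw [hG] at hz; exact hz
      rw [Set.indicator_of_mem hz, Set.indicator_of_mem hz, min_eq_right hlt.le]
    · have hle : fθ z ≤ fξ z := by
        rw [hG] at hz
        exact not_lt.mp hz
      rw [Set.indicator_of_notMem hz, Set.indicator_of_notMem hz, min_eq_left hle]
      ring
  have h2 : 0 ≤ (ξ Sᶜ).toReal - (θ Sᶜ).toReal := by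
    rw [hScomp, happξ Gᶜ, happθ Gᶜ, ← Summable.tsum_sub (hSξ.indicator Gᶜ) (hSθ.indicator Gᶜ)]
    apply tsum_nonneg
    intro z
    by_cases hz : z ∈ Gᶜ
    · have hle : fθ z ≤ fξ z := by
        have : z ∉ G := hz
        rw [hG] at this
        exact not_lt.mp this
      rw [Set.indicator_of_mem hz, Set.indicator_of_mem hz]
      linarith
    · rw [Set.indicator_of_notMem hz, Set.indicator_of_notMem hz]
      norm_num
  have hb1 : ∀ A : Set X, (θ A).toReal ≤ 1 := by
    intro A
    have := ENNReal.toReal_mono (measure_ne_top θ Set.univ)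
      (measure_mono (Set.subset_univ A))
    simpa using this
  have hb2 : ∀ A : Set X, (ξ A).toReal ≤ 1 := by
    intro A
    have := ENNReal.toReal_mono (measure_ne_top ξ Set.univ)
      (measure_mono (Set.subset_univ A))
    simpa using this
  have hbdd : BddAbove (Set.range fun A : {A : Set X // MeasurableSet A} =>
      (((θ A.1).toReal - (ξ A.1).toReal) - ((θ A.1ᶜ).toReal - (ξ A.1ᶜ).toReal))) := by
    refine ⟨2, ?_⟩
    rintro y ⟨A, rfl⟩
    have h3 := hb1 A.1
    have h4 := hb2 A.1ᶜ
    have h5 : (0:ℝ) ≤ (ξ A.1).toReal := ENNReal.toReal_nonneg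
    have h6 : (0:ℝ) ≤ (θ A.1ᶜ).toReal := ENNReal.toReal_nonneg
    simp only
    linarith
  have hsup := le_ciSup hbdd ⟨S, hSmeas⟩
  unfold tvDist
  calc (∑' z : ℕ × ℕ, (fθ z - min (fθ z) (fξ z)))
      = (θ S).toReal - (ξ S).toReal := h1.symm
    _ ≤ ((θ S).toReal - (ξ S).toReal) - ((θ Sᶜ).toReal - (ξ Sᶜ).toReal) := by linarith
    _ ≤ _ := hsup

/-- Continuity of conditional entropy in total variation: if every atom of `E` meets at
most `C` atoms of `D`, then for probability measures `θ, ξ`,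
`|H(θ, D | E) − H(ξ, D | E)| ≤ 1 + d_TV(θ,ξ)·log₂ C`. -/
theorem abs_condEntPart_sub_le {X : Type*} [MeasurableSpace X] (θ ξ : Measure X)
    [IsProbabilityMeasure θ] [IsProbabilityMeasure ξ]
    (D E : ℕ → Set X) (hD : IsCountPartition D) (hE : IsCountPartition E)
    {C : ℕ} (hC : 1 ≤ C)
    (hmeet : ∀ j, {i | (D i ∩ E j).Nonempty}.Finite ∧
      {i | (D i ∩ E j).Nonempty}.ncard ≤ C) :
    |condEntPart θ D E - condEntPart ξ D E| ≤ 1 + tvDist θ ξ * Real.logb 2 C := by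
  classical
  set T : ℕ → Finset ℕ := fun j => (hmeet j).1.toFinset with hTdef
  have hTcard : ∀ j, (T j).card ≤ C := by
    intro j
    have h2 := (hmeet j).2
    rw [Set.ncard_eq_toFinset_card _ (hmeet j).1] at h2
    exact h2
  have hTempty : ∀ j i, i ∉ T j → D i ∩ E j = ∅ := by
    intro j i hi
    have hi' : i ∉ (hmeet j).1.toFinset := hi
    rw [Set.Finite.mem_toFinset] at hi'
    exact Set.not_nonempty_iff_eq_empty.mp hi'
  obtain ⟨hps, hpt, hSθpair, hθptot⟩ := marg_aux θ D E hD hE T hTempty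
  obtain ⟨hqs, hqt, hSξpair, hξptot⟩ := marg_aux ξ D E hD hE T hTempty
  set δ : ℝ := ∑' j, ∑ i ∈ T j, ((θ (D i ∩ E j)).toReal
      - min ((θ (D i ∩ E j)).toReal) ((ξ (D i ∩ E j)).toReal)) with hδdef
  have hmain := discrete_combined T hC hTcard
      (fun i j => (θ (D i ∩ E j)).toReal) (fun i j => (ξ (D i ∩ E j)).toReal)
      (fun i j => ENNReal.toReal_nonneg) (fun i j => ENNReal.toReal_nonneg)
      hps hqs hpt hqt (δ := δ) hδdef.symm
  have hbθ := bridge θ D E hD hE T hTempty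
  have hbξ := bridge ξ D E hD hE T hTempty
  -- relate δ to the pair tsum and bound by tvDist
  have hpairnn : ∀ z : ℕ × ℕ, 0 ≤ (θ (cellSet D E z)).toReal
      - min (θ (cellSet D E z)).toReal (ξ (cellSet D E z)).toReal :=
    fun z => sub_nonneg.mpr (min_le_left _ _)
  have hSpair : Summable (fun z : ℕ × ℕ => (θ (cellSet D E z)).toReal
      - min (θ (cellSet D E z)).toReal (ξ (cellSet D E z)).toReal) :=
    Summable.of_nonneg_of_le hpairnn
      (fun z => sub_le_self _ (le_min ENNReal.toReal_nonneg ENNReal.toReal_nonneg))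
      hSθpair
  have hinner : ∀ j, Summable (fun i => (θ (cellSet D E (j, i))).toReal
      - min (θ (cellSet D E (j, i))).toReal (ξ (cellSet D E (j, i))).toReal) := by
    intro j
    apply summable_of_ne_finset_zero (s := T j)
    intro i hi
    have hz : D i ∩ E j = ∅ := hTempty j i hi
    simp [cellSet, hz]
  have hδpair : (∑' z : ℕ × ℕ, ((θ (cellSet D E z)).toReal
      - min (θ (cellSet D E z)).toReal (ξ (cellSet D E z)).toReal)) = δ := by
    rw [Summable.tsum_prod' hSpair hinner, hδdef]
    apply tsum_congr
    intro j
    exact tsum_eq_sum (fun i hi => by simp [cellSet, hTempty j i hi])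
  have htv : δ ≤ tvDist θ ξ := hδpair ▸ delta_le_tvDist θ ξ D E hD hE
  have hδnn : 0 ≤ δ := by
    rw [hδdef]
    exact tsum_nonneg fun j =>
      Finset.sum_nonneg fun i _ => sub_nonneg.mpr (min_le_left _ _)
  have hlog2 : 0 < Real.log 2 := Real.log_pos (by norm_num)
  have hlogbC : 0 ≤ Real.logb 2 C := Real.logb_nonneg (by norm_num) (by exact_mod_cast hC)
  calc |condEntPart θ D E - condEntPart ξ D E|
      = (Real.log 2)⁻¹ * |(∑' j, colEnt (T j) fun i => (θ (D i ∩ E j)).toReal)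
          - (∑' j, colEnt (T j) fun i => (ξ (D i ∩ E j)).toReal)| := by
        rw [hbθ, hbξ, ← mul_sub, abs_mul, abs_of_nonneg (inv_nonneg.mpr hlog2.le)]
    _ ≤ (Real.log 2)⁻¹ * (δ * Real.log C + Real.log 2) :=
        mul_le_mul_of_nonneg_left hmain (inv_nonneg.mpr hlog2.le)
    _ = δ * Real.logb 2 C + 1 := by
        rw [Real.logb]
        field_simp
        try ring
    _ ≤ 1 + tvDist θ ξ * Real.logb 2 C := by
        have := mul_le_mul_of_nonneg_right htv hlogbC
        linarith
end
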